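/- arXiv:2107.13918 — 5 statements merged into one kernel-verified Lean document; each statement's English description precedes it below -/
import Mathlib

section
/- Let φ : (a,∞) → ℝ be a C¹ function and let u be a solution on an interval (−Λ,Λ) of the Cauchy problem u'' = φ'(u)(1 + (u')²), u(0) = h, u'(0) = 0. Then for all x in (−Λ,Λ), the first integral identity 1 + u'(x)² = exp(2(φ(u(x)) − φ(h))) holds. -/
open Set Filter Real

/-- First integral identity for the [φ,e₃]-catenary cylinder profile ODE:
if `u'' = φ'(u)(1+(u')²)`, `u 0 = h`, `u' 0 = 0`, then
`1 + u'(x)² = exp (2 (φ (u x) − φ h))` on `(−Λ, Λ)`. -/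
theorem stmt0 (a h Λ : ℝ) (hΛ : 0 < Λ) (ha : a < h)
    (φ φ' u u' : ℝ → ℝ)
    (hφ : ∀ s ∈ Ioi a, HasDerivAt φ (φ' s) s)
    (hφc : ContinuousOn φ' (Ioi a))
    (hu : ∀ x ∈ Ioo (-Λ) Λ, HasDerivAt u (u' x) x)
    (hode : ∀ x ∈ Ioo (-Λ) Λ, HasDerivAt u' (φ' (u x) * (1 + u' x ^ 2)) x)
    (hrange : ∀ x ∈ Ioo (-Λ) Λ, u x ∈ Ioi a)
    (hu0 : u 0 = h) (hu'0 : u' 0 = 0) :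
    ∀ x ∈ Ioo (-Λ) Λ, 1 + u' x ^ 2 = Real.exp (2 * (φ (u x) - φ h)) := by
  set F : ℝ → ℝ := fun x => (1 + u' x ^ 2) * Real.exp (-2 * φ (u x)) with hF
  have h0mem : (0 : ℝ) ∈ Ioo (-Λ) Λ := ⟨by linarith, hΛ⟩
  have hFderiv : ∀ x ∈ Ioo (-Λ) Λ, HasDerivAt F 0 x := by
    intro x hx
    have h1 : HasDerivAt (fun x => 1 + u' x ^ 2)
        (2 * u' x * (φ' (u x) * (1 + u' x ^ 2))) x := by
      have := ((hode x hx).pow 2).const_add 1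
      simpa [mul_comm, mul_assoc, mul_left_comm] using this
    have h2 : HasDerivAt (fun x => Real.exp (-2 * φ (u x)))
        (Real.exp (-2 * φ (u x)) * (-2 * (φ' (u x) * u' x))) x := by
      have hc : HasDerivAt (fun x => -2 * φ (u x)) (-2 * (φ' (u x) * u' x)) x :=
        (((hφ (u x) (hrange x hx)).comp x (hu x hx))).const_mul (-2)
      exact hc.exp
    have : HasDerivAt F _ x := h1.mul h2
    convert this using 1
    ring
  have hconst : ∀ x ∈ Ioo (-Λ) Λ, F x = F 0 := by
    intro x hx
    have hconv : Convex ℝ (Ioo (-Λ) Λ) := convex_Ioo _ _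
    have := hconv.norm_image_sub_le_of_norm_hasDerivWithin_le
      (f := F) (f' := fun _ => 0) (C := 0)
      (fun y hy => (hFderiv y hy).hasDerivWithinAt)
      (fun y _ => by simp) h0mem hx
    simpa [sub_eq_zero] using this
  intro x hx
  have hFx := hconst x hx
  have hF0 : F 0 = Real.exp (-2 * φ h) := by simp [hF, hu'0, hu0]
  have : (1 + u' x ^ 2) * Real.exp (-2 * φ (u x)) = Real.exp (-2 * φ h) := by
    rw [← hF0]; exact hFx
  have hne : Real.exp (-2 * φ (u x)) ≠ 0 := (Real.exp_pos _).ne'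
  have key : 1 + u' x ^ 2 = Real.exp (-2 * φ h) / Real.exp (-2 * φ (u x)) :=
    (eq_div_iff hne).mpr this
  rw [key, ← Real.exp_sub]
  ring_nf
end

section
/- Let φ : (a,∞) → ℝ be a C¹ strictly increasing function with φ(s) → ∞ as s → ∞, and let u be the maximal solution of u'' = φ'(u)(1+(u')²), u(0)=h, u'(0)=0, on (−Λ_h, Λ_h). Then lim_{x→Λ_h} u(x) = ∞ and lim_{x→Λ_h} u'(x) = ∞. -/
open Set Filter Real Metric

/-- Picard–Lindelöf with the extra conclusion that the solution stays in the closed ball. -/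
private theorem myPicard {v : ℝ → ℝ → ℝ} {tMin tMax : ℝ} {t₀ : Icc tMin tMax} (x₀ : ℝ) {R : ℝ}
    {L K : NNReal} (hR : 0 ≤ R)
    (hpl : IsPicardLindelof v t₀ x₀ R.toNNReal 0 L K) :
    ∃ f : ℝ → ℝ, f t₀ = x₀ ∧ (∀ t ∈ Icc tMin tMax, f t ∈ closedBall x₀ R) ∧
      ∀ t ∈ Icc tMin tMax, HasDerivWithinAt f (v t (f t)) (Icc tMin tMax) t := by
  have hx : x₀ ∈ closedBall x₀ ((0 : NNReal) : ℝ) := mem_closedBall_self le_rfl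
  obtain ⟨α, hα⟩ := ODE.FunSpace.exists_isFixedPt_next hpl hx
  refine ⟨α.compProj, by rw [ODE.FunSpace.compProj_val, ← hα, ODE.FunSpace.next_apply₀],
    fun t _ => ?_, fun t ht => ?_⟩
  · have := α.compProj_mem_closedBall hpl.mul_max_le (t := t)
    rwa [Real.coe_toNNReal _ hR] at this
  · apply ODE.hasDerivWithinAt_picard_Icc t₀.2 hpl.continuousOn_uncurry
      α.continuous_compProj.continuousOn (fun _ _ => α.compProj_mem_closedBall hpl.mul_max_le)
      x₀ ht |>.congr_of_mem _ ht
    intro t' ht'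
    nth_rw 1 [← hα]
    rw [ODE.FunSpace.compProj_of_mem ht', ODE.FunSpace.next_apply]

set_option maxHeartbeats 3200000 in
/-- For `φ` C¹, strictly increasing and unbounded above, the maximal solution
of `u'' = φ'(u)(1+(u')²)`, `u 0 = h`, `u' 0 = 0` on its maximal interval
`(−Λ_h, Λ_h)` satisfies `u → ∞` and `u' → ∞` as `x → Λ_h⁻`.  Maximality is
encoded by the non-existence of a solution on any strictly larger symmetric
interval. -/
theorem stmt6 (a h Λ : ℝ) (hΛ : 0 < Λ) (ha : a < h)
    (φ φ' u u' : ℝ → ℝ)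
    (hφ : ∀ s ∈ Ioi a, HasDerivAt φ (φ' s) s)
    (hφc : ContinuousOn φ' (Ioi a))
    (hφpos : ∀ s ∈ Ioi a, 0 < φ' s)
    (htop : Tendsto φ atTop atTop)
    (hu : ∀ x ∈ Ioo (-Λ) Λ, HasDerivAt u (u' x) x)
    (hode : ∀ x ∈ Ioo (-Λ) Λ, HasDerivAt u' (φ' (u x) * (1 + u' x ^ 2)) x)
    (hrange : ∀ x ∈ Ioo (-Λ) Λ, u x ∈ Ioi a)
    (hu0 : u 0 = h) (hu'0 : u' 0 = 0)
    (hmax : ∀ Λ' : ℝ, Λ < Λ' →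
      ¬ ∃ v v' : ℝ → ℝ,
          (∀ x ∈ Ioo (-Λ') Λ', HasDerivAt v (v' x) x) ∧
          (∀ x ∈ Ioo (-Λ') Λ', HasDerivAt v' (φ' (v x) * (1 + v' x ^ 2)) x) ∧
          (∀ x ∈ Ioo (-Λ') Λ', v x ∈ Ioi a) ∧ v 0 = h ∧ v' 0 = 0) :
    Tendsto u (nhdsWithin Λ (Iio Λ)) atTop ∧
    Tendsto u' (nhdsWithin Λ (Iio Λ)) atTop := by
  have h0mem : (0 : ℝ) ∈ Ioo (-Λ) Λ := ⟨by linarith, hΛ⟩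
  -- the auxiliary function g
  set g : ℝ → ℝ := fun s => Real.sqrt (Real.exp (2 * (φ s - φ h)) - 1) with hg
  -- first integral
  have hsq : ∀ x : ℝ, (0:ℝ) < 1 + u' x ^ 2 := fun x => by positivity
  have key : ∀ x ∈ Ioo (-Λ) Λ, 1 + u' x ^ 2 = Real.exp (2 * (φ (u x) - φ h)) := by
    have hE : ∀ x ∈ Ioo (-Λ) Λ, HasDerivAt (fun y => Real.log (1 + u' y ^ 2) - 2 * φ (u y)) 0 x := by
      intro x hx
      have h1 : HasDerivAt (fun y => 1 + u' y ^ 2)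
          (2 * u' x * (φ' (u x) * (1 + u' x ^ 2))) x := by
        have := ((hode x hx).pow 2).const_add 1
        exact this.congr_deriv (by norm_num)
      have h2 : HasDerivAt (fun y => Real.log (1 + u' y ^ 2))
          ((2 * u' x * (φ' (u x) * (1 + u' x ^ 2))) / (1 + u' x ^ 2)) x :=
        h1.log (hsq x).ne'
      have h3 : HasDerivAt (fun y => 2 * φ (u y)) (2 * (φ' (u x) * u' x)) x :=
        (((hφ _ (hrange x hx)).comp x (hu x hx)).const_mul 2)
      have := h2.sub h3
      exact this.congr_deriv (by field_simp; ring)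
    have hconst : ∀ x ∈ Ioo (-Λ) Λ,
        Real.log (1 + u' x ^ 2) - 2 * φ (u x) = Real.log (1 + u' 0 ^ 2) - 2 * φ (u 0) := by
      intro x hx
      rcases le_or_gt 0 x with hx0 | hx0
      · have := constant_of_has_deriv_right_zero (f := fun y => Real.log (1 + u' y ^ 2) - 2 * φ (u y))
          (a := 0) (b := x) ?_ ?_ x ⟨hx0, le_refl x⟩
        · exact this
        · intro y hy
          exact (hE y ⟨by linarith [hy.1], lt_of_le_of_lt hy.2 hx.2⟩).continuousAt.continuousWithinAt
        · intro y hy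
          exact (hE y ⟨by linarith [hy.1], hy.2.trans hx.2⟩).hasDerivWithinAt
      · have := constant_of_has_deriv_right_zero (f := fun y => Real.log (1 + u' y ^ 2) - 2 * φ (u y))
          (a := x) (b := 0) ?_ ?_ 0 ⟨hx0.le, le_refl 0⟩
        · exact this.symm
        · intro y hy
          exact (hE y ⟨lt_of_lt_of_le hx.1 hy.1, lt_of_le_of_lt hy.2 hΛ⟩).continuousAt.continuousWithinAt
        · intro y hy
          exact (hE y ⟨lt_of_lt_of_le hx.1 hy.1, hy.2.trans hΛ⟩).hasDerivWithinAt
    intro x hx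
    have hc := hconst x hx
    rw [hu0, hu'0] at hc
    norm_num at hc
    have : Real.log (1 + u' x ^ 2) = 2 * (φ (u x) - φ h) := by linarith
    rw [← this, Real.exp_log (hsq x)]
  -- u' is strictly monotone
  have hu'mono : StrictMonoOn u' (Ioo (-Λ) Λ) := by
    apply strictMonoOn_of_deriv_pos (convex_Ioo _ _)
    · exact fun x hx => (hode x hx).continuousAt.continuousWithinAt
    · intro x hx
      rw [interior_Ioo] at hx
      rw [(hode x hx).deriv]
      exact mul_pos (hφpos _ (hrange x hx)) (hsq x)
  -- u' positive on (0, Λ)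
  have hu'pos : ∀ x ∈ Ioo 0 Λ, 0 < u' x := by
    intro x hx
    have := hu'mono h0mem ⟨by linarith [hx.1], hx.2⟩ hx.1
    rwa [hu'0] at this
  -- u strictly monotone on [0, Λ)
  have humono : StrictMonoOn u (Ico 0 Λ) := by
    apply strictMonoOn_of_deriv_pos (convex_Ico _ _)
    · intro x hx
      exact (hu x ⟨by linarith [hx.1], hx.2⟩).continuousAt.continuousWithinAt
    · intro x hx
      rw [interior_Ico] at hx
      rw [(hu x ⟨by linarith [hx.1], hx.2⟩).deriv]
      exact hu'pos x hx
  have hugt : ∀ x ∈ Ioo 0 Λ, h < u x := by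
    intro x hx
    have := humono ⟨le_refl 0, hΛ⟩ ⟨hx.1.le, hx.2⟩ hx.1
    rwa [hu0] at this
  -- u' = g ∘ u on [0, Λ)
  have hu'g : ∀ x ∈ Ico 0 Λ, u' x = g (u x) := by
    intro x hx
    have hnn : 0 ≤ u' x := by
      rcases eq_or_lt_of_le hx.1 with rfl | h0x
      · exact hu'0.ge
      · exact (hu'pos x ⟨h0x, hx.2⟩).le
    have hk := key x ⟨by linarith [hx.1], hx.2⟩
    have : u' x ^ 2 = Real.exp (2 * (φ (u x) - φ h)) - 1 := by linarith
    rw [hg]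
    simp only [← this]
    rw [Real.sqrt_sq hnn]
  -- strict monotonicity of φ
  have hφmono : StrictMonoOn φ (Ioi a) := by
    apply strictMonoOn_of_deriv_pos (convex_Ioi _)
    · exact fun s hs => (hφ s hs).continuousAt.continuousWithinAt
    · intro s hs
      rw [interior_Ioi] at hs
      rw [(hφ s hs).deriv]
      exact hφpos s hs
  -- g positive above h
  have hφgt : ∀ s, h < s → φ h < φ s := fun s hs =>
    hφmono (mem_Ioi.mpr ha) (mem_Ioi.mpr (ha.trans hs)) hs
  have hexpgt : ∀ s, h < s → 1 < Real.exp (2 * (φ s - φ h)) := by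
    intro s hs
    rw [show (1:ℝ) = Real.exp 0 by simp]
    apply Real.exp_lt_exp.mpr
    have := hφgt s hs
    linarith
  have hgpos : ∀ s, h < s → 0 < g s := by
    intro s hs
    rw [hg]
    have := hexpgt s hs
    exact Real.sqrt_pos.mpr (by linarith)
  -- g squared
  have hgsq : ∀ s, h ≤ s → g s ^ 2 = Real.exp (2 * (φ s - φ h)) - 1 := by
    intro s hs
    rw [hg]
    apply Real.sq_sqrt
    rcases eq_or_lt_of_le hs with rfl | hs'
    · simp
    · have := hexpgt s hs'
      linarith
  -- derivative of g
  set G : ℝ → ℝ := fun s => 1 / (2 * g s) * (Real.exp (2 * (φ s - φ h)) * (2 * φ' s)) with hG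
  have hgderiv : ∀ s, h < s → HasDerivAt g (G s) s := by
    intro s hs
    have hsa : s ∈ Ioi a := mem_Ioi.mpr (ha.trans hs)
    have h1 : HasDerivAt (fun t => Real.exp (2 * (φ t - φ h)) - 1)
        (Real.exp (2 * (φ s - φ h)) * (2 * φ' s)) s := by
      exact (((hφ s hsa).sub_const (φ h)).const_mul 2).exp.sub_const 1
    have h2 := h1.sqrt (by have := hexpgt s hs; intro hc; linarith)
    have hgp : (0:ℝ) < Real.sqrt (Real.exp (2 * (φ s - φ h)) - 1) := hgpos s hs
    convert h2 using 1
    simp only [hG, hg]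
    field_simp
  have hgid : ∀ s, h < s → G s * g s = φ' s * (1 + g s ^ 2) := by
    intro s hs
    have hgp := hgpos s hs
    have hq := hgsq s hs.le
    rw [hG]
    have : 1 + g s ^ 2 = Real.exp (2 * (φ s - φ h)) := by linarith
    rw [this]
    field_simp
  by_cases hbdd : ∃ M, ∀ x ∈ Ico 0 Λ, u x ≤ M
  · -- bounded case: contradiction with maximality
    exfalso
    obtain ⟨M, hM⟩ := hbdd
    set c₀ := u (Λ / 2) with hc₀def
    have hΛ2 : Λ / 2 ∈ Ioo 0 Λ := ⟨by linarith, by linarith⟩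
    have hc₀ : h < c₀ := hugt _ hΛ2
    have hc₀M : c₀ ≤ M := hM _ ⟨by linarith, by linarith⟩
    have hc₀u : ∀ y ∈ Ico 0 Λ, Λ / 2 ≤ y → c₀ ≤ u y := by
      intro y hy hy2
      rcases eq_or_lt_of_le hy2 with heq | hlt
      · rw [hc₀def, heq]
      · exact (humono ⟨by linarith, by linarith⟩ hy hlt).le
    clear_value c₀
    set slo := (c₀ + h) / 2 with hslodef
    have hslo1 : h < slo := by rw [hslodef]; linarith
    have hslo2 : slo < c₀ := by rw [hslodef]; linarith
    have hsloa : a < slo := by rw [hslodef]; linarith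
    clear_value slo
    set S : Set ℝ := Icc slo (M + 1) with hSdef
    have hSsub : S ⊆ Ioi h := fun z hz => lt_of_lt_of_le hslo1 hz.1
    have hSsuba : S ⊆ Ioi a := fun z hz => lt_trans ha (hSsub hz)
    have hsloS : slo ∈ S := ⟨le_refl _, by linarith⟩
    -- continuity of g and G on S
    have hgcont : ContinuousOn g S := fun z hz =>
      ((hgderiv z (hSsub hz)).continuousAt).continuousWithinAt
    have hφcont : ContinuousOn φ (Ioi a) := fun z hz =>
      (hφ z hz).continuousAt.continuousWithinAt
    have hGcont : ContinuousOn G S := by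
      rw [hG]
      apply ContinuousOn.mul
      · apply ContinuousOn.div continuousOn_const (continuousOn_const.mul hgcont)
        intro z hz
        have := hgpos z (hSsub hz)
        exact mul_ne_zero two_ne_zero this.ne'
      · apply ContinuousOn.mul
        · apply Real.continuous_exp.comp_continuousOn
          exact continuousOn_const.mul (((hφcont.mono hSsuba).sub continuousOn_const))
        · exact continuousOn_const.mul (hφc.mono hSsuba)
    obtain ⟨K, hK⟩ := isCompact_Icc.exists_bound_of_continuousOn hGcont
    have hK0 : (0:ℝ) ≤ K := le_trans (norm_nonneg _) (hK slo hsloS)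
    obtain ⟨Cb, hCb⟩ := isCompact_Icc.exists_bound_of_continuousOn hgcont
    have hCb0 : (0:ℝ) ≤ Cb := le_trans (norm_nonneg _) (hCb slo hsloS)
    have hgle : ∀ z ∈ S, g z ≤ Cb := by
      intro z hz
      have := hCb z hz
      rwa [Real.norm_eq_abs, abs_of_nonneg (Real.sqrt_nonneg _)] at this
    have hlip : LipschitzOnWith K.toNNReal g S := by
      apply Convex.lipschitzOnWith_of_nnnorm_hasDerivWithin_le (convex_Icc _ _)
        (f' := G) (fun z hz => (hgderiv z (hSsub hz)).hasDerivWithinAt)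
      intro z hz
      rw [← NNReal.coe_le_coe, coe_nnnorm, Real.coe_toNNReal K hK0]
      exact hK z hz
    -- set up the constants
    set r := min ((c₀ - h) / 2) 1 with hrdef
    have hr : 0 < r := lt_min (by linarith) one_pos
    have hr1 : r ≤ (c₀ - h) / 2 := min_le_left _ _
    have hr2 : r ≤ 1 := min_le_right _ _
    clear_value r
    set ε := min (r / (Cb + 1)) (Λ / 2) with hεdef
    have hε : 0 < ε := lt_min (div_pos hr (by linarith)) (by linarith)
    have hε1 : ε ≤ r / (Cb + 1) := min_le_left _ _
    have hε2 : ε ≤ Λ / 2 := min_le_right _ _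
    have hεr : Cb * ε ≤ r := by
      have h1 : ε * (Cb + 1) ≤ r := (le_div_iff₀ (by linarith)).mp hε1
      nlinarith
    clear_value ε
    set τ := Λ - ε / 2 with hτdef
    have hτ1 : Λ / 2 ≤ τ := by rw [hτdef]; linarith
    have hτΛ : τ < Λ := by rw [hτdef]; linarith
    have hτ0 : 0 < τ := by rw [hτdef]; linarith
    have hτmem : τ ∈ Ico 0 Λ := ⟨hτ0.le, hτΛ⟩
    have hcτ : c₀ ≤ u τ := hc₀u τ hτmem hτ1
    have huτM : u τ ≤ M := hM τ hτmem
    have hball : closedBall (u τ) r ⊆ S := by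
      rw [Real.closedBall_eq_Icc, hSdef]
      apply Icc_subset_Icc
      · rw [hslodef]; linarith
      · linarith
    have hτε : τ + ε = Λ + ε / 2 := by rw [hτdef]; ring
    clear_value τ
    -- Picard–Lindelöf
    have hPL : IsPicardLindelof (fun _ x => g x) (⟨τ, le_refl τ, by linarith⟩ : Icc τ (τ + ε))
        (u τ) r.toNNReal 0 Cb.toNNReal K.toNNReal :=
      IsPicardLindelof.of_time_independent (f := g)
        (fun x hx => by
          rw [Real.coe_toNNReal _ hCb0]
          exact hCb x (hball (by rwa [Real.coe_toNNReal _ hr.le] at hx)))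
        (by rw [Real.coe_toNNReal _ hr.le]; exact hlip.mono hball)
        (by
          show ((Cb.toNNReal : ℝ)) * max (τ + ε - τ) (τ - τ) ≤ (r.toNNReal : ℝ) - ((0 : NNReal) : ℝ)
          rw [Real.coe_toNNReal _ hCb0, Real.coe_toNNReal _ hr.le, NNReal.coe_zero, sub_zero,
            sub_self, add_sub_cancel_left, max_eq_left hε.le]
          exact hεr)
    obtain ⟨f, hf0, hfmem, hfderiv⟩ := myPicard (u τ) hr.le hPL
    -- agreement of u and f on [τ, Λ)
    have huf : ∀ t ∈ Ico τ Λ, u t = f t := by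
      intro t ht
      have hIcc : t ∈ Icc τ t := ⟨ht.1, le_refl t⟩
      refine ODE_solution_unique_of_mem_Icc_right (v := fun _ x => g x) (s := fun _ => S)
        (K := K.toNNReal) (f := u) (g := f) (a := τ) (b := t) (fun _ _ => hlip)
        ?_ ?_ ?_ ?_ ?_ ?_ hf0.symm hIcc
      · intro y hy
        exact (hu y ⟨by linarith [hy.1], lt_of_le_of_lt hy.2 ht.2⟩).continuousAt.continuousWithinAt
      · intro y hy
        have hy' : y ∈ Ioo (-Λ) Λ := ⟨by linarith [hy.1], hy.2.trans ht.2⟩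
        have h1 := hu y hy'
        rw [hu'g y ⟨by linarith [hy.1], hy'.2⟩] at h1
        exact h1.hasDerivWithinAt
      · intro y hy
        have hy' : y ∈ Ico 0 Λ := ⟨by linarith [hy.1], hy.2.trans ht.2⟩
        have hc : c₀ ≤ u y := hc₀u y hy' (hτ1.trans hy.1)
        exact ⟨by linarith, by linarith [hM y hy']⟩
      · intro y hy
        exact ((hfderiv y ⟨hy.1, by linarith [hy.2, ht.2, hτΛ]⟩).continuousWithinAt).mono
          (Icc_subset_Icc_right (by linarith [ht.2]))
      · intro y hy
        have hyin : y ∈ Icc τ (τ + ε) := ⟨hy.1, by linarith [hy.2, ht.2]⟩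
        refine (hfderiv y hyin).mono_of_mem_nhdsWithin (mem_nhdsWithin.mpr
          ⟨Ioo (τ - 1) (τ + ε), isOpen_Ioo, ⟨by linarith [hy.1], by linarith [hy.2, ht.2]⟩, ?_⟩)
        rintro z ⟨hz1, hz2⟩
        exact ⟨le_trans hy.1 hz2, hz1.2.le⟩
      · intro y hy
        exact hball (hfmem y ⟨hy.1, by linarith [hy.2, ht.2]⟩)
    -- glued function
    set V : ℝ → ℝ := fun y => if y < Λ then u y else f y with hVdef
    have hVu : ∀ y, y < Λ → V y = u y := fun y hy => if_pos hy
    have hVf : ∀ y ∈ Icc τ (τ + ε), V y = f y := by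
      intro y hy
      by_cases hyΛ : y < Λ
      · rw [hVu y hyΛ]; exact huf y ⟨hy.1, hyΛ⟩
      · exact if_neg hyΛ
    have hV0 : V 0 = h := by rw [hVu 0 hΛ, hu0]
    have hVgt : ∀ y, 0 < y → y < τ + ε → h < V y := by
      intro y hy1 hy2
      by_cases hyΛ : y < Λ
      · rw [hVu y hyΛ]; exact hugt y ⟨hy1, hyΛ⟩
      · push_neg at hyΛ
        have hyin : y ∈ Icc τ (τ + ε) := ⟨le_trans hτΛ.le hyΛ, hy2.le⟩
        rw [hVf y hyin]
        have := hfmem y hyin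
        rw [Real.closedBall_eq_Icc] at this
        have h1 : u τ - r ≤ f y := this.1
        linarith [hslo2, hr1, hcτ]
    have hVa : ∀ y, 0 ≤ y → y < τ + ε → a < V y := by
      intro y hy1 hy2
      rcases eq_or_lt_of_le hy1 with rfl | hy1'
      · rw [hV0]; exact ha
      · exact lt_trans ha (hVgt y hy1' hy2)
    have hVderiv : ∀ y, 0 < y → y < τ + ε → HasDerivAt V (g (V y)) y := by
      intro y hy1 hy2
      rcases lt_or_ge y Λ with hyΛ | hyΛ
      · have hev : V =ᶠ[nhds y] u :=
          eventually_of_mem (isOpen_Iio.mem_nhds hyΛ) (fun z hz => hVu z hz)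
        have h1 := hu y ⟨by linarith, hyΛ⟩
        rw [hu'g y ⟨hy1.le, hyΛ⟩] at h1
        have h2 := h1.congr_of_eventuallyEq hev
        rwa [hVu y hyΛ]
      · have hyτ : τ < y := lt_of_lt_of_le hτΛ hyΛ
        have hev : V =ᶠ[nhds y] f :=
          eventually_of_mem (isOpen_Ioo.mem_nhds (⟨hyτ, hy2⟩ : y ∈ Ioo τ (τ + ε)))
            (fun z hz => hVf z ⟨hz.1.le, hz.2.le⟩)
        have h1 := (hfderiv y ⟨hyτ.le, hy2.le⟩).hasDerivAt (Icc_mem_nhds hyτ hy2)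
        have h2 := h1.congr_of_eventuallyEq hev
        rwa [hVf y ⟨hyτ.le, hy2.le⟩]
    -- contradiction with maximality
    set Λ' := τ + ε with hΛ'def
    have hΛΛ' : Λ < Λ' := by rw [hτε]; linarith
    clear_value Λ'
    apply hmax Λ' hΛΛ'
    have habs : Tendsto (fun y : ℝ => |y|) (nhdsWithin 0 {0}ᶜ) (nhdsWithin 0 {0}ᶜ) :=
      tendsto_abs_nhdsNE_zero.mono_right (nhdsWithin_mono 0 (fun z hz => ne_of_gt hz))
    refine ⟨fun x => V |x|, fun x => Real.sign x * g (V |x|), ?_, ?_, ?_, ?_, ?_⟩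
    · -- first derivative
      intro x hx
      show HasDerivAt (fun y => V |y|) (Real.sign x * g (V |x|)) x
      rcases lt_trichotomy x 0 with hx0 | hx0 | hx0
      · have hmx1 : 0 < -x := by linarith
        have hmx2 : -x < Λ' := by linarith [hx.1]
        have h1 := (hVderiv (-x) hmx1 hmx2).comp x (hasDerivAt_neg' x)
        have hev : (fun y => V |y|) =ᶠ[nhds x] (fun y => V (-y)) :=
          eventually_of_mem (isOpen_Iio.mem_nhds hx0) (fun z hz => by simp only [abs_of_neg (mem_Iio.mp hz)])
        have h2 := h1.congr_of_eventuallyEq hev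
        have : Real.sign x * g (V |x|) = g (V (-x)) * (-1) := by
          rw [Real.sign_of_neg hx0, abs_of_neg hx0]; ring
        rwa [this]
      · subst hx0
        have : Real.sign 0 * g (V |(0:ℝ)|) = 0 := by rw [Real.sign_zero, zero_mul]
        rw [this, hasDerivAt_iff_tendsto_slope]
        have hslopeu : Tendsto (slope u 0) (nhdsWithin 0 {(0:ℝ)}ᶜ) (nhds 0) := by
          have h1 := hu 0 h0mem
          rw [hu'0] at h1
          exact hasDerivAt_iff_tendsto_slope.mp h1
        have h2 : Tendsto (fun y => slope u 0 |y|) (nhdsWithin 0 {(0:ℝ)}ᶜ) (nhds 0) :=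
          hslopeu.comp habs
        have h3 := h2.abs
        rw [abs_zero] at h3
        apply squeeze_zero_norm' _ h3
        filter_upwards [eventually_nhdsWithin_of_eventually_nhds
          (eventually_of_mem (isOpen_Ioo.mem_nhds h0mem) (fun z hz => hz)),
          self_mem_nhdsWithin] with y hy hy0
        have hyne : y ≠ 0 := hy0
        have hyabs : |y| < Λ := abs_lt.mpr ⟨hy.1, hy.2⟩
        have e1 : slope (fun z => V |z|) 0 y = (u |y| - h) / y := by
          rw [slope_def_field, sub_zero, abs_zero, hV0, hVu _ hyabs]
        have e2 : slope u 0 |y| = (u |y| - h) / |y| := by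
          rw [slope_def_field, sub_zero, hu0]
        rw [e1, Real.norm_eq_abs, e2, abs_div, abs_div, abs_abs]
      · have hx2 : x < Λ' := hx.2
        have h1 := hVderiv x hx0 hx2
        have hev : (fun y => V |y|) =ᶠ[nhds x] V :=
          eventually_of_mem (isOpen_Ioi.mem_nhds hx0) (fun z hz => by simp only [abs_of_pos (mem_Ioi.mp hz)])
        have h2 := h1.congr_of_eventuallyEq hev
        have : Real.sign x * g (V |x|) = g (V x) := by
          rw [Real.sign_of_pos hx0, abs_of_pos hx0, one_mul]
        rwa [this]
    · -- second derivative
      intro x hx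
      show HasDerivAt (fun y => Real.sign y * g (V |y|))
        (φ' (V |x|) * (1 + (Real.sign x * g (V |x|)) ^ 2)) x
      rcases lt_trichotomy x 0 with hx0 | hx0 | hx0
      · have hmx1 : 0 < -x := by linarith
        have hmx2 : -x < Λ' := by linarith [hx.1]
        have hVgt' : h < V (-x) := hVgt (-x) hmx1 hmx2
        have hinner := (hVderiv (-x) hmx1 hmx2).comp x
          (hasDerivAt_neg' x)
        have houter := ((hgderiv (V (-x)) hVgt').comp x hinner).neg
        have hev : (fun y => Real.sign y * g (V |y|)) =ᶠ[nhds x]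
            (fun y => -(g (V (-y)))) := by
          apply eventually_of_mem (isOpen_Iio.mem_nhds hx0)
          intro z hz
          show Real.sign z * g (V |z|) = -(g (V (-z)))
          rw [Real.sign_of_neg (mem_Iio.mp hz), abs_of_neg (mem_Iio.mp hz)]; ring
        have h2 := houter.congr_of_eventuallyEq hev
        have hval : φ' (V |x|) * (1 + (Real.sign x * g (V |x|)) ^ 2) =
            -(G (V (-x)) * (g (V (-x)) * -1)) := by
          rw [Real.sign_of_neg hx0, abs_of_neg hx0, neg_one_mul, neg_sq,
            ← hgid (V (-x)) hVgt']
          ring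
        rwa [hval]
      · subst hx0
        have hS2 : Tendsto (slope u' 0) (nhdsWithin 0 {(0:ℝ)}ᶜ) (nhds (φ' h * (1 + 0 ^ 2))) := by
          have h1 := hode 0 h0mem
          rw [hu0, hu'0] at h1
          exact hasDerivAt_iff_tendsto_slope.mp h1
        have h2 : Tendsto (fun y => slope u' 0 |y|) (nhdsWithin 0 {(0:ℝ)}ᶜ)
            (nhds (φ' h * (1 + 0 ^ 2))) := hS2.comp habs
        have heq : (fun y => slope u' 0 |y|) =ᶠ[nhdsWithin 0 {(0:ℝ)}ᶜ]
            (slope (fun y => Real.sign y * g (V |y|)) 0) := by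
          filter_upwards [eventually_nhdsWithin_of_eventually_nhds
            (eventually_of_mem (isOpen_Ioo.mem_nhds h0mem) (fun z hz => hz)),
            self_mem_nhdsWithin] with y hy hy0
          have hyne : (y:ℝ) ≠ 0 := hy0
          have hyabs : |y| < Λ := abs_lt.mpr ⟨hy.1, hy.2⟩
          have habs0 : (0:ℝ) ≤ |y| := abs_nonneg y
          have hVrw : V |y| = u |y| := hVu _ hyabs
          have hgu : g (u |y|) = u' |y| := (hu'g |y| ⟨habs0, hyabs⟩).symm
          have e1 : slope u' 0 |y| = u' |y| / |y| := by
            rw [slope_def_field, hu'0, sub_zero, sub_zero]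
          have e2 : slope (fun z => Real.sign z * g (V |z|)) 0 y
              = Real.sign y * g (V |y|) / y := by
            rw [slope_def_field, abs_zero, Real.sign_zero, zero_mul, sub_zero, sub_zero]
          rw [e1, e2, hVrw, hgu]
          rcases lt_or_gt_of_ne hyne with hy' | hy'
          · rw [abs_of_neg hy', Real.sign_of_neg hy', div_neg, neg_one_mul, neg_div]
          · rw [abs_of_pos hy', Real.sign_of_pos hy', one_mul]
        rw [hasDerivAt_iff_tendsto_slope]
        have h3 := h2.congr' heq
        have hvv : φ' (V |(0:ℝ)|) * (1 + (Real.sign 0 * g (V |(0:ℝ)|)) ^ 2)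
            = φ' h * (1 + 0 ^ 2) := by
          rw [abs_zero, hV0, Real.sign_zero, zero_mul]
        rw [hvv]
        exact h3
      · have hx2 : x < Λ' := hx.2
        have hVgt' : h < V x := hVgt x hx0 hx2
        have houter := (hgderiv (V x) hVgt').comp x
          (hVderiv x hx0 hx2)
        have hev : (fun y => Real.sign y * g (V |y|)) =ᶠ[nhds x] (fun y => g (V y)) := by
          apply eventually_of_mem (isOpen_Ioi.mem_nhds hx0)
          intro z hz
          show Real.sign z * g (V |z|) = g (V z)
          rw [Real.sign_of_pos (mem_Ioi.mp hz), abs_of_pos (mem_Ioi.mp hz), one_mul]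
        have h2 := houter.congr_of_eventuallyEq hev
        have hval : φ' (V |x|) * (1 + (Real.sign x * g (V |x|)) ^ 2) = G (V x) * g (V x) := by
          rw [Real.sign_of_pos hx0, abs_of_pos hx0, one_mul, hgid (V x) hVgt']
        rwa [hval]
    · -- range
      intro x hx
      show V |x| ∈ Ioi a
      exact hVa |x| (abs_nonneg x) (abs_lt.mpr ⟨hx.1, hx.2⟩)
    · show V |0| = h
      rw [abs_zero, hV0]
    · show Real.sign 0 * g (V |0|) = 0
      rw [Real.sign_zero, zero_mul]
  · -- unbounded case: conclude
    push_neg at hbdd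
    have hten : Tendsto u (nhdsWithin Λ (Iio Λ)) atTop := by
      rw [Filter.tendsto_atTop]
      intro b
      obtain ⟨x₁, hx₁, hbx⟩ := hbdd b
      filter_upwards [Ioo_mem_nhdsLT_of_mem (⟨hx₁.2, le_refl Λ⟩ : Λ ∈ Ioc x₁ Λ)] with y hy
      exact (hbx.le.trans (humono hx₁ ⟨hx₁.1.trans hy.1.le, hy.2⟩ hy.1).le)
    refine ⟨hten, ?_⟩
    rw [Filter.tendsto_atTop]
    intro b
    have hT : Tendsto (fun x => 2 * (φ (u x) - φ h)) (nhdsWithin Λ (Iio Λ)) atTop := by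
      apply Tendsto.const_mul_atTop two_pos
      simp only [sub_eq_add_neg]
      exact tendsto_atTop_add_const_right _ (-(φ h)) (htop.comp hten)
    have hE := Real.tendsto_exp_atTop.comp hT
    filter_upwards [hE.eventually_ge_atTop ((max b 0) ^ 2 + 1),
      Ioo_mem_nhdsLT_of_mem (⟨hΛ, le_refl Λ⟩ : Λ ∈ Ioc 0 Λ)] with x h1 h2
    have hx : x ∈ Ico 0 Λ := ⟨h2.1.le, h2.2⟩
    have hkey := key x ⟨by linarith [h2.1], h2.2⟩
    simp only [Function.comp_apply] at h1
    have h3 : (max b 0) ^ 2 ≤ u' x ^ 2 := by nlinarith [hkey]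
    have h4 : 0 ≤ u' x := by
      rcases eq_or_lt_of_le hx.1 with rfl | hlt
      · exact hu'0.ge
      · exact (hu'pos x ⟨hlt, hx.2⟩).le
    calc b ≤ max b 0 := le_max_left _ _
    _ = Real.sqrt ((max b 0) ^ 2) := (Real.sqrt_sq (le_max_right _ _)).symm
    _ ≤ Real.sqrt (u' x ^ 2) := Real.sqrt_le_sqrt h3
    _ = u' x := Real.sqrt_sq h4
end

section
/- Let φ : (a,∞) → ℝ be a C¹ function and suppose there exists k > 0 with φ'(s) ≥ k for all s ∈ (a,∞). Then the maximal solution u of u'' = φ'(u)(1+(u')²), u(0)=h, u'(0)=0 has maximal interval (−Λ_h, Λ_h) with Λ_h ≤ π/(2k). -/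
open Set Filter Real

/-- If `φ' ≥ k > 0` on `(a,∞)`, then any solution of `u'' = φ'(u)(1+(u')²)`,
`u 0 = h`, `u' 0 = 0` on `(−Λ, Λ)` must have `Λ ≤ π/(2k)`; in particular the
maximal interval `(−Λ_h, Λ_h)` satisfies `Λ_h ≤ π/(2k)`. -/
theorem stmt7 (a h k Λ : ℝ) (hk : 0 < k) (ha : a < h)
    (φ φ' u u' : ℝ → ℝ)
    (hφ : ∀ s ∈ Ioi a, HasDerivAt φ (φ' s) s)
    (hφc : ContinuousOn φ' (Ioi a))
    (hφk : ∀ s ∈ Ioi a, k ≤ φ' s)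
    (hu : ∀ x ∈ Ioo (-Λ) Λ, HasDerivAt u (u' x) x)
    (hode : ∀ x ∈ Ioo (-Λ) Λ, HasDerivAt u' (φ' (u x) * (1 + u' x ^ 2)) x)
    (hrange : ∀ x ∈ Ioo (-Λ) Λ, u x ∈ Ioi a)
    (hu0 : u 0 = h) (hu'0 : u' 0 = 0) :
    Λ ≤ π / (2 * k) := by
  by_contra hcon
  push_neg at hcon
  have hπ : 0 < π / (2 * k) := by positivity
  set g : ℝ → ℝ := fun x => Real.arctan (u' x) - k * x with hg_def
  have hg : ∀ y ∈ Ioo (-Λ) Λ, HasDerivAt g (φ' (u y) - k) y := by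
    intro y hy
    have h1 : HasDerivAt (fun x => Real.arctan (u' x))
        ((1 / (1 + u' y ^ 2)) * (φ' (u y) * (1 + u' y ^ 2))) y :=
      (Real.hasDerivAt_arctan (u' y)).comp y (hode y hy)
    have h2 : HasDerivAt (fun x : ℝ => k * x) k y := by
      simpa using (hasDerivAt_id y).const_mul k
    have hne : (1 : ℝ) + u' y ^ 2 ≠ 0 := by positivity
    have := h1.sub h2
    rw [one_div, mul_comm (φ' (u y)), inv_mul_cancel_left₀ hne] at this
    exact this
  -- pick x strictly between π/(2k) and Λ
  set x := (π / (2 * k) + Λ) / 2 with hx_def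
  have hx1 : π / (2 * k) < x := by simp only [hx_def]; linarith
  have hx2 : x < Λ := by simp only [hx_def]; linarith
  have hx0 : 0 < x := lt_trans hπ hx1
  have hsub : Icc (0 : ℝ) x ⊆ Ioo (-Λ) Λ := by
    intro t ht
    constructor
    · linarith [ht.1, hx0, hx2]
    · linarith [ht.2]
  have hmono : MonotoneOn g (Icc (0 : ℝ) x) := by
    apply monotoneOn_of_deriv_nonneg (convex_Icc 0 x)
    · exact fun t ht => ((hg t (hsub ht)).continuousAt.continuousWithinAt)
    · intro t ht
      rw [interior_Icc] at ht
      exact ((hg t (hsub (Ioo_subset_Icc_self ht))).differentiableAt).differentiableWithinAt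
    · intro t ht
      rw [interior_Icc] at ht
      have htm := hsub (Ioo_subset_Icc_self ht)
      rw [(hg t htm).deriv]
      have := hφk (u t) (hrange t htm)
      linarith
  have h0mem : (0 : ℝ) ∈ Icc (0 : ℝ) x := ⟨le_refl _, le_of_lt hx0⟩
  have hxmem : x ∈ Icc (0 : ℝ) x := ⟨le_of_lt hx0, le_refl _⟩
  have hgle := hmono h0mem hxmem (le_of_lt hx0)
  have hg0 : g 0 = 0 := by simp [hg_def, hu'0]
  have harctan : Real.arctan (u' x) < π / 2 := Real.arctan_lt_pi_div_two _
  rw [hg_def] at hgle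
  simp only [hg0] at *
  -- g 0 = 0 ≤ arctan (u' x) - k * x , so k * x ≤ arctan (u' x) < π/2
  have : k * x < π / 2 := by
    simp [hg_def, hu'0] at hgle
    linarith
  have : x < π / (2 * k) := by
    rw [lt_div_iff₀ (by positivity)]
    linarith [this, mul_comm k x]
  linarith
end

section
/- Let φ : (a,∞) → ℝ be C¹ and strictly increasing with φ(s) → ∞ as s → ∞, with e^{−φ} integrable on (a,∞), and suppose φ' is nondecreasing. For λ ∈ (a,∞), let Λ_λ < ∞ be the half-length of the maximal interval of the solution of u'' = φ'(u)(1+(u')²), u(0)=λ, u'(0)=0. Then λ ↦ Λ_λ is nonincreasing. -/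
open Set Filter Real
open MeasureTheory Topology


noncomputable def gg (r : ℝ) : ℝ := Real.sqrt (Real.exp (2*r) - 1)

lemma gg_nonneg (r : ℝ) : 0 ≤ gg r := Real.sqrt_nonneg _

lemma gg_zero : gg 0 = 0 := by simp [gg]

lemma gg_pos {r : ℝ} (hr : 0 < r) : 0 < gg r := by
  apply Real.sqrt_pos.2
  have : (1:ℝ) < Real.exp (2*r) := by
    rw [← Real.exp_zero]; exact Real.exp_lt_exp.2 (by linarith)
  linarith

lemma gg_sq {r : ℝ} (hr : 0 ≤ r) : gg r ^ 2 = Real.exp (2*r) - 1 := by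
  rw [gg, sq_sqrt]
  have : (1:ℝ) ≤ Real.exp (2*r) := by
    rw [← Real.exp_zero]; exact Real.exp_le_exp.2 (by linarith)
  linarith

lemma gg_cont : Continuous gg := by
  apply Real.continuous_sqrt.comp; continuity

lemma gg_mono : Monotone gg := by
  intro r s hrs
  apply Real.sqrt_le_sqrt
  have := Real.exp_le_exp.2 (by linarith : 2*r ≤ 2*s)
  linarith

lemma gg_hasDeriv {r : ℝ} (hr : 0 < r) :
    HasDerivAt gg (Real.exp (2*r) / gg r) r := by
  have h1 : HasDerivAt (fun r => Real.exp (2*r) - 1) (2 * Real.exp (2*r)) r := by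
    have := ((hasDerivAt_id r).const_mul 2).exp
    simpa [mul_comm] using this.sub_const 1
  have h2 : Real.exp (2*r) - 1 ≠ 0 := by
    have : (1:ℝ) < Real.exp (2*r) := by
      rw [← Real.exp_zero]; exact Real.exp_lt_exp.2 (by linarith)
    linarith
  have := h1.sqrt h2
  unfold gg
  convert this using 1
  rw [show (2 * Real.exp (2*r)) / (2 * Real.sqrt (Real.exp (2*r) - 1)) = Real.exp (2*r) / Real.sqrt (Real.exp (2*r) - 1) by ring_nf]

/-- Local version of `hasDerivAt_of_hasDerivAt_of_ne`. -/
lemma aux_hasDerivAt_of_ne {f g : ℝ → ℝ} {x δ : ℝ} (hδ : 0 < δ)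
    (f_diff : ∀ y, y ≠ x → |y - x| < δ → HasDerivAt f (g y) y)
    (hf : ContinuousAt f x) (hg : ContinuousAt g x) : HasDerivAt f (g x) x := by
  have memA : Ioo x (x+δ) ∈ 𝓝[>] x := Ioo_mem_nhdsGT_of_mem ⟨le_refl _, by linarith⟩
  have memB : Ioo (x-δ) x ∈ 𝓝[<] x := Ioo_mem_nhdsLT_of_mem ⟨by linarith, le_refl _⟩
  have dA : ∀ y ∈ Ioo x (x+δ), HasDerivAt f (g y) y := by
    intro y hy
    exact f_diff y (ne_of_gt hy.1) (by rw [abs_lt]; constructor <;> [linarith [hy.1]; linarith [hy.2]])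
  have dB : ∀ y ∈ Ioo (x-δ) x, HasDerivAt f (g y) y := by
    intro y hy
    exact f_diff y (ne_of_lt hy.2) (by rw [abs_lt]; constructor <;> [linarith [hy.1]; linarith [hy.2]])
  have A : HasDerivWithinAt f (g x) (Ici x) x := by
    apply hasDerivWithinAt_Ici_of_tendsto_deriv
      (fun y hy => (dA y hy).differentiableAt.differentiableWithinAt)
      hf.continuousWithinAt memA
    have : Tendsto g (𝓝[>] x) (𝓝 (g x)) := tendsto_inf_left hg
    apply this.congr'
    filter_upwards [memA] with y hy
    exact (dA y hy).deriv.symm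
  have B : HasDerivWithinAt f (g x) (Iic x) x := by
    apply hasDerivWithinAt_Iic_of_tendsto_deriv
      (fun y hy => (dB y hy).differentiableAt.differentiableWithinAt)
      hf.continuousWithinAt memB
    have : Tendsto g (𝓝[<] x) (𝓝 (g x)) := tendsto_inf_left hg
    apply this.congr'
    filter_upwards [memB] with y hy
    exact (dB y hy).deriv.symm
  simpa using B.union A

noncomputable def hh (φ : ℝ → ℝ) (lam : ℝ) : ℝ → ℝ := fun μ => (gg (φ μ - φ lam))⁻¹

noncomputable def LL (φ : ℝ → ℝ) (lam : ℝ) : ℝ := ∫ μ in Set.Ioi lam, hh φ lam μ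

section Phi

variable {a : ℝ} {φ φ' : ℝ → ℝ}

lemma phi_cont (hφ : ∀ s ∈ Ioi a, HasDerivAt φ (φ' s) s) : ContinuousOn φ (Ioi a) :=
  fun s hs => (hφ s hs).continuousAt.continuousWithinAt

lemma phi_mono (hφ : ∀ s ∈ Ioi a, HasDerivAt φ (φ' s) s)
    (hφpos : ∀ s ∈ Ioi a, 0 < φ' s) : StrictMonoOn φ (Ioi a) := by
  apply strictMonoOn_of_deriv_pos (convex_Ioi a) (phi_cont hφ)
  intro x hx
  rw [interior_Ioi] at hx
  rw [(hφ x hx).deriv]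
  exact hφpos x hx

/-- Linear lower bound from convexity: `φ' lam * (μ - lam) ≤ φ μ - φ lam`. -/
lemma phi_lower (hφ : ∀ s ∈ Ioi a, HasDerivAt φ (φ' s) s)
    (hφconv : MonotoneOn φ' (Ioi a)) {lam μ : ℝ} (hlam : a < lam) (hμ : lam ≤ μ) :
    φ' lam * (μ - lam) ≤ φ μ - φ lam := by
  have hsub : Ici lam ⊆ Ioi a := fun x hx => lt_of_lt_of_le hlam hx
  have hmono : MonotoneOn (fun s => φ s - φ' lam * s) (Ici lam) := by
    apply monotoneOn_of_deriv_nonneg (convex_Ici lam)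
    · intro x hx
      exact (((hφ x (hsub hx)).sub ((hasDerivAt_id x).const_mul (φ' lam))).continuousAt).continuousWithinAt
    · intro x hx
      rw [interior_Ici] at hx
      exact (((hφ x (hsub (mem_Ici.2 (le_of_lt hx)))).sub ((hasDerivAt_id x).const_mul (φ' lam))).differentiableAt).differentiableWithinAt
    · intro x hx
      rw [interior_Ici] at hx
      have hd : HasDerivAt (fun s => φ s - φ' lam * s) (φ' x - φ' lam * 1) x :=
        (hφ x (hsub (mem_Ici.2 (le_of_lt hx)))).sub ((hasDerivAt_id x).const_mul (φ' lam))
      rw [hd.deriv]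
      simp only [mul_one, sub_nonneg]
      exact hφconv (mem_of_mem_of_subset (self_mem_Ici) hsub) (hsub (mem_Ici.2 (le_of_lt hx))) (le_of_lt hx)
  have := hmono self_mem_Ici (show μ ∈ Ici lam from hμ) hμ
  simp only at this
  nlinarith

lemma phi_gt {lam μ : ℝ} (hφ : ∀ s ∈ Ioi a, HasDerivAt φ (φ' s) s)
    (hφpos : ∀ s ∈ Ioi a, 0 < φ' s) (hlam : a < lam) (hμ : lam < μ) : φ lam < φ μ :=
  phi_mono hφ hφpos hlam (lt_trans hlam hμ) hμ

lemma hh_contOn (hφ : ∀ s ∈ Ioi a, HasDerivAt φ (φ' s) s)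
    (hφpos : ∀ s ∈ Ioi a, 0 < φ' s) {lam : ℝ} (hlam : a < lam) :
    ContinuousOn (hh φ lam) (Ioi lam) := by
  apply ContinuousOn.inv₀
  · exact gg_cont.comp_continuousOn
      (((phi_cont hφ).mono (fun x hx => lt_trans hlam hx)).sub continuousOn_const)
  · intro μ hμ
    exact ne_of_gt (gg_pos (by simp [sub_pos, phi_gt hφ hφpos hlam hμ]))

lemma hh_nonneg (φ : ℝ → ℝ) (lam : ℝ) (μ : ℝ) : 0 ≤ hh φ lam μ :=
  inv_nonneg.2 (gg_nonneg _)

/-- Integrability of the integrand on `(lam, ∞)`. -/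
lemma hh_integrable (hφ : ∀ s ∈ Ioi a, HasDerivAt φ (φ' s) s)
    (hφpos : ∀ s ∈ Ioi a, 0 < φ' s) (hφconv : MonotoneOn φ' (Ioi a))
    (htop : Tendsto φ atTop atTop)
    (hint : MeasureTheory.IntegrableOn (fun t => Real.exp (-φ t)) (Ioi a))
    {lam : ℝ} (hlam : a < lam) :
    MeasureTheory.IntegrableOn (hh φ lam) (Ioi lam) := by
  -- choose b beyond which φ μ ≥ φ lam + 1
  obtain ⟨b₀, hb₀⟩ := (htop.eventually (eventually_ge_atTop (φ lam + 1))).exists_forall_of_atTop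
  set b : ℝ := max b₀ (lam + 1) with hb_def
  have hb_lam : lam < b := lt_of_lt_of_le (by linarith) (le_max_right _ _)
  have hb_phi : ∀ μ, b ≤ μ → φ lam + 1 ≤ φ μ := fun μ hμ => hb₀ μ (le_trans (le_max_left _ _) hμ)
  have key : Ioi lam = Ioc lam b ∪ Ioi b := (Ioc_union_Ioi_eq_Ioi (le_of_lt hb_lam)).symm
  rw [key]
  apply MeasureTheory.IntegrableOn.union
  · -- near lam : dominate by c * (μ - lam)^(-1/2)
    set c : ℝ := φ' lam with hc_def
    have hc : 0 < c := hφpos lam hlam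
    have hdom : MeasureTheory.IntegrableOn
        (fun μ => (Real.sqrt (2*c))⁻¹ * (Real.sqrt (μ - lam))⁻¹) (Ioc lam b) := by
      apply MeasureTheory.Integrable.const_mul
      have : IntervalIntegrable (fun x : ℝ => (Real.sqrt x)⁻¹) volume 0 (b - lam) := by
        have h := intervalIntegral.intervalIntegrable_rpow' (a := 0) (b := b - lam) (r := -(1/2)) (by norm_num)
        apply h.congr_ae
        rw [EventuallyEq, MeasureTheory.ae_restrict_iff' measurableSet_uIoc]
        filter_upwards with x hx
        rw [uIoc_of_le (by linarith)] at hx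
        rw [Real.sqrt_eq_rpow, ← Real.rpow_neg (le_of_lt hx.1)]
      have h2 : IntervalIntegrable (fun x : ℝ => (Real.sqrt (x - lam))⁻¹) volume lam b := by
        simpa using this.comp_sub_right lam
      rw [intervalIntegrable_iff_integrableOn_Ioc_of_le (le_of_lt hb_lam)] at h2
      exact h2
    apply MeasureTheory.Integrable.mono' hdom
    · exact ((hh_contOn hφ hφpos hlam).mono Ioc_subset_Ioi_self).aestronglyMeasurable
        measurableSet_Ioc
    · rw [MeasureTheory.ae_restrict_iff' measurableSet_Ioc]
      filter_upwards with μ hμ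
      rw [Real.norm_eq_abs, abs_of_nonneg (hh_nonneg φ lam μ)]
      have h1 : c * (μ - lam) ≤ φ μ - φ lam := phi_lower hφ hφconv hlam (le_of_lt hμ.1)
      have h2 : Real.sqrt (2 * (c * (μ - lam))) ≤ gg (φ μ - φ lam) := by
        apply Real.sqrt_le_sqrt
        have := Real.add_one_le_exp (2 * (φ μ - φ lam))
        nlinarith
      have h3 : (0:ℝ) < Real.sqrt (2 * (c * (μ - lam))) := by
        apply Real.sqrt_pos.2; nlinarith [hμ.1]
      have h4 := inv_anti₀ h3 h2
      apply le_trans h4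
      rw [show 2 * (c * (μ - lam)) = (2*c) * (μ - lam) by ring,
        Real.sqrt_mul (by linarith) (μ - lam), mul_inv]
  · -- tail : dominate by √2 * e^{φ lam} * e^{-φ μ}
    have hba : a < b := lt_trans hlam hb_lam
    have hdom : MeasureTheory.IntegrableOn
        (fun μ => (Real.sqrt 2 * Real.exp (φ lam)) * Real.exp (-φ μ)) (Ioi b) := by
      exact (hint.mono_set (fun x hx => lt_trans hba hx)).const_mul _
    apply MeasureTheory.Integrable.mono' hdom
    · exact ((hh_contOn hφ hφpos hlam).mono (fun x hx => lt_trans hb_lam hx)).aestronglyMeasurable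
        measurableSet_Ioi
    · rw [MeasureTheory.ae_restrict_iff' measurableSet_Ioi]
      filter_upwards with μ hμ
      rw [Real.norm_eq_abs, abs_of_nonneg (hh_nonneg φ lam μ)]
      set r : ℝ := φ μ - φ lam with hr_def
      have hr1 : 1 ≤ r := by
        have := hb_phi μ (le_of_lt hμ); simp only [hr_def]; linarith
      have hexp2 : (2:ℝ) ≤ Real.exp (2*r) := by
        calc (2:ℝ) ≤ Real.exp 1 := by
              have := Real.add_one_le_exp (1:ℝ); linarith
          _ ≤ Real.exp (2*r) := Real.exp_le_exp.2 (by linarith)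
      have hexp1 : (1:ℝ) ≤ Real.exp (2*r) := by linarith
      have h2 : Real.exp r / Real.sqrt 2 ≤ gg r := by
        rw [gg, Real.le_sqrt (by positivity) (by linarith)]
        have hsq : Real.sqrt 2 ^ 2 = 2 := Real.sq_sqrt (by norm_num)
        have hmul : Real.exp r * Real.exp r = Real.exp (2*r) := by
          rw [← Real.exp_add]; ring_nf
        rw [div_pow, hsq]
        nlinarith
      have h2' : (0:ℝ) < Real.exp r / Real.sqrt 2 := by positivity
      have h4 := inv_anti₀ h2' h2
      apply le_trans h4
      rw [show (Real.exp r / Real.sqrt 2)⁻¹ = Real.sqrt 2 * (Real.exp r)⁻¹ by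
        field_simp]
      rw [← Real.exp_neg, show -r = φ lam + (-φ μ) by simp [hr_def]; ring, Real.exp_add]
      rw [← mul_assoc]

noncomputable def FF (φ : ℝ → ℝ) (lam : ℝ) : ℝ → ℝ := fun y => ∫ μ in lam..y, hh φ lam μ

lemma FF_intervalIntegrable (hin : MeasureTheory.IntegrableOn (hh φ lam) (Ioi lam))
    {y : ℝ} (hy : lam ≤ y) : IntervalIntegrable (hh φ lam) volume lam y := by
  rw [intervalIntegrable_iff_integrableOn_Ioc_of_le hy]
  exact hin.mono_set Ioc_subset_Ioi_self

lemma FF_hasDeriv (hφ : ∀ s ∈ Ioi a, HasDerivAt φ (φ' s) s)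
    (hφpos : ∀ s ∈ Ioi a, 0 < φ' s) {lam : ℝ} (hlam : a < lam)
    (hin : MeasureTheory.IntegrableOn (hh φ lam) (Ioi lam))
    {y : ℝ} (hy : lam < y) : HasDerivAt (FF φ lam) (hh φ lam y) y := by
  apply intervalIntegral.integral_hasDerivAt_right (FF_intervalIntegrable hin (le_of_lt hy))
  · exact (hh_contOn hφ hφpos hlam).stronglyMeasurableAtFilter isOpen_Ioi y hy
  · exact ((hh_contOn hφ hφpos hlam) y hy).continuousAt (Ioi_mem_nhds hy)

lemma FF_self (φ : ℝ → ℝ) (lam : ℝ) : FF φ lam lam = 0 := by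
  simp [FF]

lemma FF_contWithin (hin : MeasureTheory.IntegrableOn (hh φ lam) (Ioi lam)) :
    ContinuousWithinAt (FF φ lam) (Ici lam) lam := by
  have hicc : MeasureTheory.IntegrableOn (hh φ lam) (Icc lam (lam+1)) := by
    exact (hin.mono_set Ioc_subset_Ioi_self).congr_set_ae Ioc_ae_eq_Icc.symm
  have hcont := intervalIntegral.continuousOn_primitive (a := lam) (b := lam+1) hicc
  have h0 : ContinuousWithinAt (fun x => ∫ t in Ioc lam x, hh φ lam t) (Icc lam (lam+1)) lam :=
    hcont lam (left_mem_Icc.2 (by linarith))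
  refine ContinuousWithinAt.congr (h0.mono_of_mem_nhdsWithin
    (Icc_mem_nhdsGE_of_mem (left_mem_Ico.2 (by linarith)))) ?_ ?_
  · intro y hy
    rw [FF, intervalIntegral.integral_of_le hy]
  · rw [FF, intervalIntegral.integral_of_le (le_refl lam)]

lemma FF_contOn (hφ : ∀ s ∈ Ioi a, HasDerivAt φ (φ' s) s)
    (hφpos : ∀ s ∈ Ioi a, 0 < φ' s) {lam : ℝ} (hlam : a < lam)
    (hin : MeasureTheory.IntegrableOn (hh φ lam) (Ioi lam)) :
    ContinuousOn (FF φ lam) (Ici lam) := by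
  intro y hy
  rcases eq_or_lt_of_le (mem_Ici.1 hy) with h | h
  · rw [← h]; exact FF_contWithin hin
  · exact (FF_hasDeriv hφ hφpos hlam hin h).continuousAt.continuousWithinAt

lemma hh_pos (hφ : ∀ s ∈ Ioi a, HasDerivAt φ (φ' s) s)
    (hφpos : ∀ s ∈ Ioi a, 0 < φ' s) {lam μ : ℝ} (hlam : a < lam) (hμ : lam < μ) :
    0 < hh φ lam μ := by
  apply inv_pos.2
  exact gg_pos (by simp [sub_pos, phi_gt hφ hφpos hlam hμ])

lemma FF_strictMono (hφ : ∀ s ∈ Ioi a, HasDerivAt φ (φ' s) s)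
    (hφpos : ∀ s ∈ Ioi a, 0 < φ' s) {lam : ℝ} (hlam : a < lam)
    (hin : MeasureTheory.IntegrableOn (hh φ lam) (Ioi lam)) :
    StrictMonoOn (FF φ lam) (Ici lam) := by
  apply strictMonoOn_of_deriv_pos (convex_Ici lam) (FF_contOn hφ hφpos hlam hin)
  intro y hy
  rw [interior_Ici] at hy
  rw [(FF_hasDeriv hφ hφpos hlam hin hy).deriv]
  exact hh_pos hφ hφpos hlam hy

lemma FF_le_LL (hin : MeasureTheory.IntegrableOn (hh φ lam) (Ioi lam))
    {y : ℝ} (hy : lam ≤ y) : FF φ lam y ≤ LL φ lam := by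
  rw [FF, intervalIntegral.integral_of_le hy, LL]
  apply MeasureTheory.setIntegral_mono_set hin
  · filter_upwards with μ; exact hh_nonneg φ lam μ
  · exact (Ioc_subset_Ioi_self).eventuallyLE

lemma FF_tendsto (hin : MeasureTheory.IntegrableOn (hh φ lam) (Ioi lam)) :
    Tendsto (FF φ lam) atTop (𝓝 (LL φ lam)) :=
  MeasureTheory.intervalIntegral_tendsto_integral_Ioi lam hin tendsto_id

end Phi

section Sol

variable {a lam Λ : ℝ} {φ φ' u u' : ℝ → ℝ}

/-- Any solution on `(-Λ, Λ)` forces `Λ ≤ LL φ lam`. -/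
lemma sol_le_LL (hφ : ∀ s ∈ Ioi a, HasDerivAt φ (φ' s) s)
    (hφpos : ∀ s ∈ Ioi a, 0 < φ' s) (hφconv : MonotoneOn φ' (Ioi a))
    (htop : Tendsto φ atTop atTop)
    (hint : MeasureTheory.IntegrableOn (fun t => Real.exp (-φ t)) (Ioi a))
    (hlam : a < lam) (hΛ : 0 < Λ)
    (hu : ∀ x ∈ Ioo (-Λ) Λ, HasDerivAt u (u' x) x)
    (hode : ∀ x ∈ Ioo (-Λ) Λ, HasDerivAt u' (φ' (u x) * (1 + u' x ^ 2)) x)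
    (hrange : ∀ x ∈ Ioo (-Λ) Λ, u x ∈ Ioi a)
    (hu0 : u 0 = lam) (hu'0 : u' 0 = 0) :
    Λ ≤ LL φ lam := by
  have h0mem : (0:ℝ) ∈ Ioo (-Λ) Λ := ⟨by linarith, hΛ⟩
  have hin : MeasureTheory.IntegrableOn (hh φ lam) (Ioi lam) :=
    hh_integrable hφ hφpos hφconv htop hint hlam
  have uc : ContinuousOn u (Ioo (-Λ) Λ) :=
    fun x hx => (hu x hx).continuousAt.continuousWithinAt
  have u'c : ContinuousOn u' (Ioo (-Λ) Λ) :=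
    fun x hx => (hode x hx).continuousAt.continuousWithinAt
  -- u' is strictly increasing
  have hu'mono : StrictMonoOn u' (Ioo (-Λ) Λ) := by
    apply strictMonoOn_of_deriv_pos (convex_Ioo _ _) u'c
    intro x hx
    rw [interior_Ioo] at hx
    rw [(hode x hx).deriv]
    have := hφpos (u x) (hrange x hx)
    positivity
  have hu'pos : ∀ x ∈ Ioo 0 Λ, 0 < u' x := by
    intro x hx
    have := hu'mono h0mem ⟨by linarith [hx.1], hx.2⟩ hx.1
    rwa [hu'0] at this
  -- u is strictly increasing on [0, Λ)
  have humono : StrictMonoOn u (Ico 0 Λ) := by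
    apply strictMonoOn_of_deriv_pos (convex_Ico _ _)
      (uc.mono (fun x hx => ⟨by linarith [hx.1], hx.2⟩))
    intro x hx
    rw [interior_Ico] at hx
    rw [(hu x ⟨by linarith [hx.1], hx.2⟩).deriv]
    exact hu'pos x hx
  have hult : ∀ x ∈ Ioo 0 Λ, lam < u x := by
    intro x hx
    have := humono (left_mem_Ico.2 hΛ) ⟨le_of_lt hx.1, hx.2⟩ hx.1
    rwa [hu0] at this
  -- energy is constant
  set E : ℝ → ℝ := fun x => Real.log (1 + u' x ^ 2) - 2 * φ (u x) with hE_def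
  have hE : ∀ x ∈ Ioo (-Λ) Λ, HasDerivAt E 0 x := by
    intro x hx
    have hsq : (0:ℝ) < 1 + u' x ^ 2 := by positivity
    have hlog : HasDerivAt (fun y => Real.log (1 + u' y ^ 2))
        ((2 * u' x ^ 1 * (φ' (u x) * (1 + u' x ^ 2))) / (1 + u' x ^ 2)) x := by
      have hpow : HasDerivAt (fun y => 1 + u' y ^ 2)
          (2 * u' x ^ 1 * (φ' (u x) * (1 + u' x ^ 2))) x := by
        have := ((hode x hx).pow 2).const_add 1
        simpa using this
      exact hpow.log (ne_of_gt hsq)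
    have hphi : HasDerivAt (fun y => φ (u y)) (φ' (u x) * u' x) x :=
      (hφ (u x) (hrange x hx)).comp x (hu x hx)
    have := hlog.sub (hphi.const_mul 2)
    refine this.congr_deriv ?_
    rw [mul_div_assoc, mul_div_cancel_right₀ _ (ne_of_gt hsq)]
    ring
  have hEconst : ∀ x ∈ Ico 0 Λ, E x = E 0 := by
    intro x hx
    have hsub : Icc 0 x ⊆ Ioo (-Λ) Λ := fun y hy =>
      ⟨by linarith [hy.1], lt_of_le_of_lt hy.2 hx.2⟩
    exact constant_of_has_deriv_right_zero
      (fun y hy => (hE y (hsub hy)).continuousAt.continuousWithinAt)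
      (fun y hy => (hE y (hsub (Ico_subset_Icc_self hy))).hasDerivWithinAt)
      x (right_mem_Icc.2 hx.1)
  have hE0 : E 0 = -2 * φ lam := by
    simp [hE_def, hu'0, hu0]
  -- first integral
  have hfi : ∀ x ∈ Ioo 0 Λ, u' x = gg (φ (u x) - φ lam) := by
    intro x hx
    have hx' : x ∈ Ico 0 Λ := ⟨le_of_lt hx.1, hx.2⟩
    have h1 := hEconst x hx'
    rw [hE0, hE_def] at h1
    simp only at h1
    have hsq : (0:ℝ) < 1 + u' x ^ 2 := by positivity
    have h2 : 1 + u' x ^ 2 = Real.exp (2 * (φ (u x) - φ lam)) := by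
      rw [← Real.exp_log hsq]
      congr 1
      linarith
    have h3 : u' x ^ 2 = Real.exp (2 * (φ (u x) - φ lam)) - 1 := by linarith
    rw [gg, ← h3, Real.sqrt_sq (le_of_lt (hu'pos x hx))]
  -- F ∘ u - id is constant zero
  set G : ℝ → ℝ := fun x => FF φ lam (u x) - x with hG_def
  have hG : ∀ x ∈ Ioo 0 Λ, HasDerivAt G 0 x := by
    intro x hx
    have hxm : x ∈ Ioo (-Λ) Λ := ⟨by linarith [hx.1], hx.2⟩
    have hr : lam < u x := hult x hx
    have hFu : HasDerivAt (fun y => FF φ lam (u y)) (hh φ lam (u x) * u' x) x :=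
      (FF_hasDeriv hφ hφpos hlam hin hr).comp x (hu x hxm)
    have := hFu.sub (hasDerivAt_id x)
    refine this.congr_deriv ?_
    rw [hfi x hx, hh]
    have hggpos : 0 < gg (φ (u x) - φ lam) :=
      gg_pos (by simp [sub_pos, phi_gt hφ hφpos hlam hr])
    field_simp
    norm_num
  have hGconst : ∀ x ∈ Ioo 0 Λ, ∀ y ∈ Ioo 0 Λ, x ≤ y → G y = G x := by
    intro x hx y hy hxy
    have hsub : Icc x y ⊆ Ioo 0 Λ := fun z hz =>
      ⟨lt_of_lt_of_le hx.1 hz.1, lt_of_le_of_lt hz.2 hy.2⟩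
    exact constant_of_has_deriv_right_zero
      (fun z hz => (hG z (hsub hz)).continuousAt.continuousWithinAt)
      (fun z hz => (hG z (hsub (Ico_subset_Icc_self hz))).hasDerivWithinAt)
      y (right_mem_Icc.2 hxy)
  -- G tends to 0 at 0+
  have hGlim : Tendsto G (𝓝[>] (0:ℝ)) (𝓝 0) := by
    have hucont : ContinuousAt u 0 := (hu 0 h0mem).continuousAt
    have h1 : Tendsto u (𝓝[>] (0:ℝ)) (𝓝[Ici lam] lam) := by
      rw [tendsto_nhdsWithin_iff]
      constructor
      · have := hucont.tendsto
        rw [hu0] at this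
        exact this.mono_left nhdsWithin_le_nhds
      · filter_upwards [Ioo_mem_nhdsGT_of_mem (⟨le_refl _, hΛ⟩ : (0:ℝ) ∈ Ico 0 Λ)] with
          x hx
        exact le_of_lt (hult x hx)
    have h2 : Tendsto (fun x => FF φ lam (u x)) (𝓝[>] (0:ℝ)) (𝓝 0) := by
      have := (FF_contWithin hin).tendsto
      rw [FF_self] at this
      exact this.comp h1
    have h3 : Tendsto (fun x => x) (𝓝[>] (0:ℝ)) (𝓝 0) :=
      tendsto_id.mono_left nhdsWithin_le_nhds
    simpa using h2.sub h3
  -- conclude : G = 0 on (0, Λ), hence x ≤ LL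
  have hGzero : ∀ x ∈ Ioo 0 Λ, G x = 0 := by
    intro x hx
    have hev : ∀ᶠ y in 𝓝[>] (0:ℝ), G y = G x := by
      filter_upwards [Ioo_mem_nhdsGT_of_mem (⟨le_refl _, hx.1⟩ : (0:ℝ) ∈ Ico 0 x)] with
        y hy
      exact (hGconst y ⟨hy.1, lt_trans hy.2 hx.2⟩ x hx (le_of_lt hy.2)).symm
    have : Tendsto G (𝓝[>] (0:ℝ)) (𝓝 (G x)) :=
      Tendsto.congr' (EventuallyEq.symm hev) tendsto_const_nhds
    exact tendsto_nhds_unique this hGlim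
  have hxle : ∀ x ∈ Ioo 0 Λ, x ≤ LL φ lam := by
    intro x hx
    have h1 := hGzero x hx
    rw [hG_def] at h1
    simp only [sub_eq_zero] at h1
    rw [← h1]
    exact FF_le_LL hin (le_of_lt (hult x hx))
  by_contra hcon
  push_neg at hcon
  set x : ℝ := (max (LL φ lam) 0 + Λ) / 2 with hx_def
  have hmax : max (LL φ lam) 0 < Λ := max_lt hcon hΛ
  have hx1 : 0 < x := by
    have : (0:ℝ) ≤ max (LL φ lam) 0 := le_max_right _ _
    rw [hx_def]; linarith
  have hx2 : x < Λ := by rw [hx_def]; linarith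
  have hx3 : LL φ lam < x := by
    have : LL φ lam ≤ max (LL φ lam) 0 := le_max_left _ _
    rw [hx_def]; linarith
  linarith [hxle x ⟨hx1, hx2⟩]

end Sol

section Mono

variable {a : ℝ} {φ φ' : ℝ → ℝ}

lemma psi_mono (hφ : ∀ s ∈ Ioi a, HasDerivAt φ (φ' s) s)
    (hφconv : MonotoneOn φ' (Ioi a)) {d : ℝ} (hd : 0 ≤ d) :
    MonotoneOn (fun s => φ (s + d) - φ s) (Ioi a) := by
  have hshift : ∀ s ∈ Ioi a, s + d ∈ Ioi a := fun s hs => by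
    simp only [mem_Ioi] at *; linarith
  have hder : ∀ s ∈ Ioi a, HasDerivAt (fun s => φ (s + d) - φ s) (φ' (s + d) - φ' s) s := by
    intro s hs
    have h1 : HasDerivAt (fun s => φ (s + d)) (φ' (s + d) * 1) s :=
      (hφ (s + d) (hshift s hs)).comp s ((hasDerivAt_id s).add_const d)
    have h2 := h1.sub (hφ s hs)
    simp only [mul_one] at h2
    exact h2
  apply monotoneOn_of_deriv_nonneg (convex_Ioi a)
  · exact fun s hs => (hder s hs).continuousAt.continuousWithinAt
  · intro s hs
    rw [interior_Ioi] at hs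
    exact (hder s hs).differentiableAt.differentiableWithinAt
  · intro s hs
    rw [interior_Ioi] at hs
    rw [(hder s hs).deriv]
    simp only [sub_nonneg]
    exact hφconv hs (hshift s hs) (by linarith)

lemma LL_mono (hφ : ∀ s ∈ Ioi a, HasDerivAt φ (φ' s) s)
    (hφpos : ∀ s ∈ Ioi a, 0 < φ' s) (hφconv : MonotoneOn φ' (Ioi a))
    (htop : Tendsto φ atTop atTop)
    (hint : MeasureTheory.IntegrableOn (fun t => Real.exp (-φ t)) (Ioi a))
    {lam₁ lam₂ : ℝ} (h1 : a < lam₁) (h12 : lam₁ ≤ lam₂) :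
    LL φ lam₂ ≤ LL φ lam₁ := by
  set d : ℝ := lam₂ - lam₁ with hd_def
  have hd : 0 ≤ d := by rw [hd_def]; linarith
  have h2 : a < lam₂ := by linarith
  have hin₁ := hh_integrable hφ hφpos hφconv htop hint h1
  have hin₂ := hh_integrable hφ hφpos hφconv htop hint h2
  have hemb : MeasurableEmbedding (fun x : ℝ => x + d) :=
    (Homeomorph.addRight d).isClosedEmbedding.measurableEmbedding
  have hmp : MeasureTheory.MeasurePreserving (fun x : ℝ => x + d) volume volume :=
    MeasureTheory.measurePreserving_add_right volume d
  have hpre : (fun x : ℝ => x + d) ⁻¹' (Ioi lam₂) = Ioi lam₁ := by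
    rw [preimage_add_const_Ioi]
    congr 1
    rw [hd_def]; ring
  -- change of variables
  have hcov : LL φ lam₂ = ∫ μ in Ioi lam₁, hh φ lam₂ (μ + d) := by
    rw [LL, ← hmp.setIntegral_preimage_emb hemb (hh φ lam₂) (Ioi lam₂), hpre]
  have hshift_int : MeasureTheory.IntegrableOn (fun μ => hh φ lam₂ (μ + d)) (Ioi lam₁) := by
    have := (hmp.integrableOn_comp_preimage hemb (f := hh φ lam₂) (s := Ioi lam₂)).2 hin₂
    rwa [hpre] at this
  -- pointwise comparison
  have hpt : ∀ μ ∈ Ioi lam₁, hh φ lam₂ (μ + d) ≤ hh φ lam₁ μ := by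
    intro μ hμ
    have hμa : μ ∈ Ioi a := lt_trans h1 hμ
    have hr1 : 0 < φ μ - φ lam₁ := by
      simp [sub_pos, phi_gt hφ hφpos h1 hμ]
    have hr12 : φ μ - φ lam₁ ≤ φ (μ + d) - φ lam₂ := by
      have := psi_mono hφ hφconv hd (mem_Ioi.2 h1) hμa (le_of_lt hμ)
      simp only at this
      have hlam2 : lam₁ + d = lam₂ := by rw [hd_def]; ring
      rw [hlam2] at this
      linarith
    rw [hh, hh]
    apply inv_anti₀ (gg_pos hr1) (gg_mono hr12)
  rw [hcov, LL]
  exact MeasureTheory.setIntegral_mono_on hshift_int hin₁ measurableSet_Ioi hpt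

end Mono

section Exists

variable {a lam : ℝ} {φ φ' : ℝ → ℝ}

lemma abs_sign_le_one (y : ℝ) : |Real.sign y| ≤ 1 := by
  rcases lt_trichotomy y 0 with h | h | h
  · rw [Real.sign_of_neg h]; norm_num
  · rw [h, Real.sign_zero]; norm_num
  · rw [Real.sign_of_pos h]; norm_num

/-- Existence of a solution on `(-LL φ lam, LL φ lam)`. -/
lemma sol_exists (hφ : ∀ s ∈ Ioi a, HasDerivAt φ (φ' s) s)
    (hφc : ContinuousOn φ' (Ioi a))
    (hφpos : ∀ s ∈ Ioi a, 0 < φ' s) (hφconv : MonotoneOn φ' (Ioi a))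
    (htop : Tendsto φ atTop atTop)
    (hint : MeasureTheory.IntegrableOn (fun t => Real.exp (-φ t)) (Ioi a))
    (hlam : a < lam) :
    ∃ v v' : ℝ → ℝ,
      (∀ x ∈ Ioo (-(LL φ lam)) (LL φ lam), HasDerivAt v (v' x) x) ∧
      (∀ x ∈ Ioo (-(LL φ lam)) (LL φ lam), HasDerivAt v' (φ' (v x) * (1 + v' x ^ 2)) x) ∧
      (∀ x ∈ Ioo (-(LL φ lam)) (LL φ lam), v x ∈ Ioi a) ∧ v 0 = lam ∧ v' 0 = 0 := by
  set L : ℝ := LL φ lam with hL_def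
  by_cases hL : 0 < L
  case neg =>
    refine ⟨fun _ => lam, fun _ => 0, ?_, ?_, ?_, rfl, rfl⟩ <;>
    · intro x hx
      exfalso
      apply hL
      have := hx.1.trans hx.2
      linarith
  case pos =>
  have hin : MeasureTheory.IntegrableOn (hh φ lam) (Ioi lam) :=
    hh_integrable hφ hφpos hφconv htop hint hlam
  have hFmono := FF_strictMono hφ hφpos hlam hin
  have hFself : FF φ lam lam = 0 := FF_self φ lam
  have hF0le : ∀ y, lam ≤ y → 0 ≤ FF φ lam y := by
    intro y hy
    rcases eq_or_lt_of_le hy with h | h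
    · rw [← h, hFself]
    · rw [← hFself]; exact le_of_lt (hFmono self_mem_Ici hy h)
  -- the inverse function V
  have hex : ∀ x : ℝ, ∃ y, lam ≤ y ∧ (|x| < L → FF φ lam y = |x|) ∧ (¬ |x| < L → y = lam) := by
    intro x
    by_cases hx : |x| < L
    · have hev1 : ∀ᶠ z in atTop, |x| < FF φ lam z :=
        (FF_tendsto hin).eventually (eventually_gt_nhds hx)
      obtain ⟨y₀, hy₀⟩ := (hev1.and (eventually_ge_atTop lam)).exists
      obtain ⟨y, hy, hFy⟩ := intermediate_value_Icc hy₀.2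
        ((FF_contOn hφ hφpos hlam hin).mono Icc_subset_Ici_self)
        (⟨by rw [hFself]; exact abs_nonneg x, le_of_lt hy₀.1⟩ : |x| ∈ Icc (FF φ lam lam) (FF φ lam y₀))
      exact ⟨y, hy.1, fun _ => hFy, fun h => absurd hx h⟩
    · exact ⟨lam, le_refl _, fun h => absurd h hx, fun _ => rfl⟩
  choose V hVlam hVF hVtriv using hex
  have hFinj : InjOn (FF φ lam) (Ici lam) := hFmono.injOn
  have hV0 : V 0 = lam := by
    have h1 : FF φ lam (V 0) = 0 := by simpa using hVF 0 (by simpa using hL)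
    exact hFinj (hVlam 0) self_mem_Ici (by rw [h1, hFself])
  have hVeven : ∀ x, V (-x) = V x := by
    intro x
    by_cases hx : |x| < L
    · have h1 : FF φ lam (V (-x)) = |x| := by
        rw [hVF (-x) (by rwa [abs_neg])]; rw [abs_neg]
      have h2 : FF φ lam (V x) = |x| := hVF x hx
      exact hFinj (hVlam _) (hVlam _) (by rw [h1, h2])
    · rw [hVtriv (-x) (by rwa [abs_neg]), hVtriv x hx]
  have hVgt : ∀ x, 0 < |x| → |x| < L → lam < V x := by
    intro x h0 hx
    rcases eq_or_lt_of_le (hVlam x) with h | h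
    · exfalso
      have := hVF x hx
      rw [← h, hFself] at this
      linarith
    · exact h
  have hVmemIoi : ∀ x, V x ∈ Ioi a := fun x => lt_of_lt_of_le hlam (hVlam x)
  have hFleL : ∀ y, lam ≤ y → FF φ lam y ≤ L := fun y hy => FF_le_LL hin hy
  -- continuity of V at points of (0, L)
  have hVcont_pos : ∀ x ∈ Ioo 0 L, ContinuousAt V x := by
    intro x hx
    have hxabs : |x| < L := by rw [abs_of_pos hx.1]; exact hx.2
    have hVx : lam < V x := hVgt x (by rw [abs_of_pos hx.1]; exact hx.1) hxabs
    have hFVx : FF φ lam (V x) = x := by rw [hVF x hxabs, abs_of_pos hx.1]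
    rw [Metric.continuousAt_iff]
    intro ε hε
    set ε' : ℝ := min ε ((V x - lam)/2) with hε'_def
    have hε' : 0 < ε' := lt_min hε (by linarith)
    have hε'2 : ε' ≤ (V x - lam)/2 := min_le_right _ _
    set ym : ℝ := V x - ε' with hym_def
    set yp : ℝ := V x + ε' with hyp_def
    have hym_mem : lam ≤ ym := by rw [hym_def]; linarith
    have hFym : FF φ lam ym < x := by
      rw [← hFVx]
      exact hFmono (mem_Ici.2 hym_mem) (mem_Ici.2 (le_of_lt hVx)) (by rw [hym_def]; linarith)
    have hyp_mem : lam ≤ yp := by rw [hyp_def]; linarith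
    have hFyp : x < FF φ lam yp := by
      rw [← hFVx]
      exact hFmono (mem_Ici.2 (le_of_lt hVx)) (mem_Ici.2 hyp_mem) (by rw [hyp_def]; linarith)
    refine ⟨min (x - FF φ lam ym) (FF φ lam yp - x),
      lt_min (by linarith) (by linarith), ?_⟩
    intro y hy
    rw [Real.dist_eq] at hy ⊢
    rw [abs_lt] at hy
    have hmin1 : min (x - FF φ lam ym) (FF φ lam yp - x) ≤ x - FF φ lam ym := min_le_left _ _
    have hmin2 : min (x - FF φ lam ym) (FF φ lam yp - x) ≤ FF φ lam yp - x := min_le_right _ _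
    have hy1 : FF φ lam ym < y := by linarith
    have hy2 : y < FF φ lam yp := by linarith
    have hy0 : 0 < y := lt_of_le_of_lt (hF0le ym hym_mem) hy1
    have hyL : y < L := lt_of_lt_of_le hy2 (hFleL yp hyp_mem)
    have hyabs : |y| < L := by rw [abs_of_pos hy0]; exact hyL
    have hFVy : FF φ lam (V y) = y := by rw [hVF y hyabs, abs_of_pos hy0]
    have hlow : ym < V y := by
      by_contra hc
      push_neg at hc
      have := hFmono.monotoneOn (mem_Ici.2 (hVlam y)) (mem_Ici.2 hym_mem) hc
      rw [hFVy] at this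
      linarith
    have hhigh : V y < yp := by
      by_contra hc
      push_neg at hc
      have := hFmono.monotoneOn (mem_Ici.2 hyp_mem) (mem_Ici.2 (hVlam y)) hc
      rw [hFVy] at this
      linarith
    have hε'e : ε' ≤ ε := min_le_left _ _
    rw [abs_lt]
    constructor
    · rw [hym_def] at hlow; linarith
    · rw [hyp_def] at hhigh; linarith
  -- continuity of V at 0
  have hVcont_zero : ContinuousAt V 0 := by
    rw [Metric.continuousAt_iff]
    intro ε hε
    have hypF : 0 < FF φ lam (lam + ε/2) := by
      rw [← hFself]
      exact hFmono self_mem_Ici (mem_Ici.2 (by linarith)) (by linarith)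
    refine ⟨min (FF φ lam (lam + ε/2)) L, lt_min hypF hL, ?_⟩
    intro y hy
    rw [Real.dist_eq] at hy ⊢
    simp only [sub_zero] at hy
    have hyabs : |y| < L := lt_of_lt_of_le hy (min_le_right _ _)
    have hFVy : FF φ lam (V y) = |y| := hVF y hyabs
    have hhigh : V y < lam + ε/2 := by
      by_contra hc
      push_neg at hc
      have := hFmono.monotoneOn (mem_Ici.2 (by linarith : lam ≤ lam + ε/2)) (mem_Ici.2 (hVlam y)) hc
      rw [hFVy] at this
      have := lt_of_lt_of_le hy (min_le_left _ _)
      linarith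
    rw [hV0, abs_lt]
    constructor
    · linarith [hVlam y]
    · linarith
  -- continuity of V at negative points
  have hVcont : ∀ x ∈ Ioo (-L) L, ContinuousAt V x := by
    intro x hx
    rcases lt_trichotomy x 0 with h | h | h
    · have hVeq : V = (fun y => V (-y)) := funext fun y => (hVeven y).symm
      rw [hVeq]
      have : ContinuousAt V (-x) := hVcont_pos (-x) ⟨by linarith, by linarith [hx.1]⟩
      exact this.comp (continuous_neg.continuousAt)
    · rw [h]; exact hVcont_zero
    · exact hVcont_pos x ⟨h, hx.2⟩
  -- the candidate derivative
  set W : ℝ → ℝ := fun x => Real.sign x * gg (φ (V x) - φ lam) with hW_def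
  have hW0 : W 0 = 0 := by simp [hW_def]
  have hrpos : ∀ x, 0 < |x| → |x| < L → 0 < φ (V x) - φ lam := by
    intro x h0 hx
    have := phi_gt hφ hφpos hlam (hVgt x h0 hx)
    linarith
  have hcontW : ContinuousAt W 0 := by
    have hB : ContinuousAt (fun y => gg (φ (V y) - φ lam)) 0 := by
      apply gg_cont.continuousAt.comp
      apply ContinuousAt.sub _ continuousAt_const
      exact ((hφ (V 0) (hVmemIoi 0)).continuousAt).comp hVcont_zero
    have hB0 : gg (φ (V 0) - φ lam) = 0 := by
      rw [hV0]
      simp [gg_zero]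
    have htendB : Tendsto (fun y => gg (φ (V y) - φ lam)) (𝓝 0) (𝓝 0) := by
      have := hB.tendsto
      rwa [hB0] at this
    have hbnd : ∀ y, ‖W y‖ ≤ gg (φ (V y) - φ lam) := by
      intro y
      rw [hW_def]
      simp only [Real.norm_eq_abs, abs_mul]
      calc |Real.sign y| * |gg (φ (V y) - φ lam)| ≤ 1 * |gg (φ (V y) - φ lam)| :=
            mul_le_mul_of_nonneg_right (abs_sign_le_one y) (abs_nonneg _)
        _ = gg (φ (V y) - φ lam) := by rw [one_mul, abs_of_nonneg (gg_nonneg _)]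
    have htend : Tendsto W (𝓝 0) (𝓝 0) := squeeze_zero_norm hbnd htendB
    rw [ContinuousAt, hW0]
    exact htend
  -- derivative of V at positive points
  have hVderiv_pos : ∀ x ∈ Ioo 0 L, HasDerivAt V (gg (φ (V x) - φ lam)) x := by
    intro x hx
    have hxabs : |x| < L := by rw [abs_of_pos hx.1]; exact hx.2
    have habs0 : 0 < |x| := by rw [abs_of_pos hx.1]; exact hx.1
    have hVx : lam < V x := hVgt x habs0 hxabs
    have hFd : HasDerivAt (FF φ lam) (hh φ lam (V x)) (V x) :=
      FF_hasDeriv hφ hφpos hlam hin hVx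
    have hne : hh φ lam (V x) ≠ 0 := ne_of_gt (hh_pos hφ hφpos hlam hVx)
    have hev : ∀ᶠ y in 𝓝 x, FF φ lam (V y) = y := by
      filter_upwards [Ioo_mem_nhds hx.1 hx.2] with y hy
      rw [hVF y (by rw [abs_of_pos hy.1]; exact hy.2), abs_of_pos hy.1]
    have := HasDerivAt.of_local_left_inverse (hVcont x ⟨by linarith [hx.1], hx.2⟩) hFd hne hev
    rw [hh, inv_inv] at this
    exact this
  -- derivative of V at negative points
  have hVderiv_neg : ∀ x ∈ Ioo (-L) 0, HasDerivAt V (-gg (φ (V (-x)) - φ lam)) x := by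
    intro x hx
    have hx' : -x ∈ Ioo 0 L := ⟨by linarith [hx.2], by linarith [hx.1]⟩
    have h1 : HasDerivAt (fun y => V (-y)) (gg (φ (V (-x)) - φ lam) * (-1)) x :=
      (hVderiv_pos (-x) hx').comp x (hasDerivAt_neg x)
    have h2 : HasDerivAt (fun y => V (-y)) (-gg (φ (V (-x)) - φ lam)) x := by
      convert h1 using 1
      ring
    exact h2.congr_of_eventuallyEq (Eventually.of_forall (fun y => (hVeven y).symm))
  -- derivative of V everywhere in (-L, L)
  have hVderiv : ∀ x ∈ Ioo (-L) L, HasDerivAt V (W x) x := by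
    intro x hx
    rcases lt_trichotomy x 0 with h | h | h
    · have := hVderiv_neg x ⟨hx.1, h⟩
      convert this using 1
      rw [hW_def]
      simp only
      rw [Real.sign_of_neg h, hVeven x]
      ring
    · rw [h, hW0]
      have h0 : HasDerivAt V (W 0) 0 := by
        apply aux_hasDerivAt_of_ne hL _ hVcont_zero hcontW
        intro y hy hyL
        rw [sub_zero] at hyL
        rcases lt_trichotomy y 0 with h' | h' | h'
        · have := hVderiv_neg y ⟨by rw [abs_lt] at hyL; simpa using hyL.1, h'⟩
          convert this using 1
          rw [hW_def]
          simp only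
          rw [Real.sign_of_neg h', hVeven y]
          ring
        · exact absurd h' hy
        · have := hVderiv_pos y ⟨h', by rwa [abs_of_pos h'] at hyL⟩
          convert this using 1
          rw [hW_def]
          simp only
          rw [Real.sign_of_pos h']
          ring
      rw [hW0] at h0
      exact h0
    · have := hVderiv_pos x ⟨h, hx.2⟩
      convert this using 1
      rw [hW_def]
      simp only
      rw [Real.sign_of_pos h]
      ring
  -- derivative of W at positive points
  have hWderiv_pos : ∀ x ∈ Ioo 0 L, HasDerivAt W (φ' (V x) * (1 + W x ^ 2)) x := by
    intro x hx
    have hxabs0 : 0 < |x| := by rw [abs_of_pos hx.1]; exact hx.1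
    have hxabs : |x| < L := by rw [abs_of_pos hx.1]; exact hx.2
    set r : ℝ := φ (V x) - φ lam with hr_def
    have hr : 0 < r := hrpos x hxabs0 hxabs
    have hVd := hVderiv_pos x hx
    have hφV : HasDerivAt (fun y => φ (V y)) (φ' (V x) * gg r) x :=
      (hφ (V x) (hVmemIoi x)).comp x hVd
    have hinner : HasDerivAt (fun y => φ (V y) - φ lam) (φ' (V x) * gg r) x :=
      hφV.sub_const _
    have hgd : HasDerivAt (fun y => gg (φ (V y) - φ lam))
        ((Real.exp (2*r) / gg r) * (φ' (V x) * gg r)) x :=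
      by have := (gg_hasDeriv hr).comp x hinner; exact this
    have hWev : W =ᶠ[𝓝 x] (fun y => gg (φ (V y) - φ lam)) := by
      filter_upwards [Ioo_mem_nhds hx.1 hx.2] with y hy
      rw [hW_def]
      simp only
      rw [Real.sign_of_pos hy.1, one_mul]
    have hWx : W x = gg r := by
      rw [hW_def]
      simp only
      rw [Real.sign_of_pos hx.1, one_mul]
    have hval : (Real.exp (2*r) / gg r) * (φ' (V x) * gg r) = φ' (V x) * (1 + W x ^ 2) := by
      have hggne : gg r ≠ 0 := ne_of_gt (gg_pos hr)
      rw [hWx, gg_sq (le_of_lt hr)]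
      field_simp
      ring
    rw [← hval]
    exact hgd.congr_of_eventuallyEq hWev
  -- derivative of W at negative points
  have hWderiv_neg : ∀ x ∈ Ioo (-L) 0, HasDerivAt W (φ' (V x) * (1 + W x ^ 2)) x := by
    intro x hx
    have hx' : -x ∈ Ioo 0 L := ⟨by linarith [hx.2], by linarith [hx.1]⟩
    set r : ℝ := φ (V (-x)) - φ lam with hr_def
    have hr : 0 < r := hrpos (-x) (by rw [abs_of_pos hx'.1]; exact hx'.1)
      (by rw [abs_of_pos hx'.1]; exact hx'.2)
    have hVnd : HasDerivAt (fun y => V (-y)) (gg r * (-1)) x :=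
      (hVderiv_pos (-x) hx').comp x (hasDerivAt_neg x)
    have hφV : HasDerivAt (fun y => φ (V (-y))) (φ' (V (-x)) * (gg r * (-1))) x :=
      (hφ (V (-x)) (hVmemIoi _)).comp x hVnd
    have hinner : HasDerivAt (fun y => φ (V (-y)) - φ lam) (φ' (V (-x)) * (gg r * (-1))) x :=
      hφV.sub_const _
    have hgd : HasDerivAt (fun y => gg (φ (V (-y)) - φ lam))
        ((Real.exp (2*r) / gg r) * (φ' (V (-x)) * (gg r * (-1)))) x :=
      by have := (gg_hasDeriv hr).comp x hinner; exact this
    have hgdneg : HasDerivAt (fun y => -gg (φ (V (-y)) - φ lam))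
        (-((Real.exp (2*r) / gg r) * (φ' (V (-x)) * (gg r * (-1))))) x := hgd.neg
    have hWev : W =ᶠ[𝓝 x] (fun y => -gg (φ (V (-y)) - φ lam)) := by
      filter_upwards [Ioo_mem_nhds hx.1 hx.2] with y hy
      rw [hW_def]
      simp only
      rw [Real.sign_of_neg hy.2, hVeven y]
      ring
    have hWx : W x = -gg r := by
      rw [hW_def]
      simp only
      rw [Real.sign_of_neg hx.2, ← hVeven x]
      ring
    have hval : -((Real.exp (2*r) / gg r) * (φ' (V (-x)) * (gg r * (-1)))) =
        φ' (V x) * (1 + W x ^ 2) := by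
      have hggne : gg r ≠ 0 := ne_of_gt (gg_pos hr)
      rw [hWx, hVeven x] at *
      rw [show (-gg r) ^ 2 = gg r ^ 2 by ring, gg_sq (le_of_lt hr)]
      field_simp
      ring
    rw [← hval]
    exact hgdneg.congr_of_eventuallyEq hWev
  -- derivative of W everywhere
  have hWderiv : ∀ x ∈ Ioo (-L) L, HasDerivAt W (φ' (V x) * (1 + W x ^ 2)) x := by
    intro x hx
    rcases lt_trichotomy x 0 with h | h | h
    · exact hWderiv_neg x ⟨hx.1, h⟩
    · subst h
      have hcontG : ContinuousAt (fun y => φ' (V y) * (1 + W y ^ 2)) 0 := by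
        apply ContinuousAt.mul
        · exact (hφc.continuousAt (isOpen_Ioi.mem_nhds (hVmemIoi 0))).comp hVcont_zero
        · exact continuousAt_const.add (hcontW.pow 2)
      have := aux_hasDerivAt_of_ne hL (g := fun y => φ' (V y) * (1 + W y ^ 2))
        (fun y hy hyL => by
          rw [sub_zero] at hyL
          rcases lt_trichotomy y 0 with h' | h' | h'
          · refine hWderiv_neg y ⟨?_, h'⟩
            rw [abs_lt] at hyL
            linarith [hyL.1]
          · exact absurd h' hy
          · exact hWderiv_pos y ⟨h', by rwa [abs_of_pos h'] at hyL⟩) hcontW hcontG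
      exact this
    · exact hWderiv_pos x ⟨h, hx.2⟩
  exact ⟨V, W, hVderiv, hWderiv, fun x _ => hVmemIoi x, hV0, hW0⟩

end Exists

/-- Monotonicity of the half-width of the maximal interval: for `φ` C¹,
strictly increasing, convex (`φ'` nondecreasing), unbounded above and with
`e^{−φ}` integrable on `(a,∞)`, if `λ₁ ≤ λ₂` and `u₁, u₂` are the maximal
solutions of `u'' = φ'(u)(1+(u')²)` with `uᵢ 0 = λᵢ`, `uᵢ' 0 = 0` on maximal
intervals `(−Λ₁, Λ₁)` and `(−Λ₂, Λ₂)`, then `Λ₂ ≤ Λ₁`. -/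
theorem stmt9 (a lam₁ lam₂ Λ₁ Λ₂ : ℝ) (ha₁ : a < lam₁) (h12 : lam₁ ≤ lam₂)
    (hΛ₁ : 0 < Λ₁) (hΛ₂ : 0 < Λ₂)
    (φ φ' u₁ u₁' u₂ u₂' : ℝ → ℝ)
    (hφ : ∀ s ∈ Ioi a, HasDerivAt φ (φ' s) s)
    (hφc : ContinuousOn φ' (Ioi a))
    (hφpos : ∀ s ∈ Ioi a, 0 < φ' s)
    (hφconv : MonotoneOn φ' (Ioi a))
    (htop : Tendsto φ atTop atTop)
    (hint : MeasureTheory.IntegrableOn (fun t => Real.exp (-φ t)) (Ioi a))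
    (hu₁ : ∀ x ∈ Ioo (-Λ₁) Λ₁, HasDerivAt u₁ (u₁' x) x)
    (hode₁ : ∀ x ∈ Ioo (-Λ₁) Λ₁, HasDerivAt u₁' (φ' (u₁ x) * (1 + u₁' x ^ 2)) x)
    (hrange₁ : ∀ x ∈ Ioo (-Λ₁) Λ₁, u₁ x ∈ Ioi a)
    (hu₁0 : u₁ 0 = lam₁) (hu₁'0 : u₁' 0 = 0)
    (hmax₁ : ∀ Λ' : ℝ, Λ₁ < Λ' →
      ¬ ∃ v v' : ℝ → ℝ,
          (∀ x ∈ Ioo (-Λ') Λ', HasDerivAt v (v' x) x) ∧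
          (∀ x ∈ Ioo (-Λ') Λ', HasDerivAt v' (φ' (v x) * (1 + v' x ^ 2)) x) ∧
          (∀ x ∈ Ioo (-Λ') Λ', v x ∈ Ioi a) ∧ v 0 = lam₁ ∧ v' 0 = 0)
    (hu₂ : ∀ x ∈ Ioo (-Λ₂) Λ₂, HasDerivAt u₂ (u₂' x) x)
    (hode₂ : ∀ x ∈ Ioo (-Λ₂) Λ₂, HasDerivAt u₂' (φ' (u₂ x) * (1 + u₂' x ^ 2)) x)
    (hrange₂ : ∀ x ∈ Ioo (-Λ₂) Λ₂, u₂ x ∈ Ioi a)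
    (hu₂0 : u₂ 0 = lam₂) (hu₂'0 : u₂' 0 = 0)
    (hmax₂ : ∀ Λ' : ℝ, Λ₂ < Λ' →
      ¬ ∃ v v' : ℝ → ℝ,
          (∀ x ∈ Ioo (-Λ') Λ', HasDerivAt v (v' x) x) ∧
          (∀ x ∈ Ioo (-Λ') Λ', HasDerivAt v' (φ' (v x) * (1 + v' x ^ 2)) x) ∧
          (∀ x ∈ Ioo (-Λ') Λ', v x ∈ Ioi a) ∧ v 0 = lam₂ ∧ v' 0 = 0) :
    Λ₂ ≤ Λ₁ := by
  have ha₂ : a < lam₂ := lt_of_lt_of_le ha₁ h12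
  have hL2 : Λ₂ ≤ LL φ lam₂ :=
    sol_le_LL hφ hφpos hφconv htop hint ha₂ hΛ₂ hu₂ hode₂ hrange₂ hu₂0 hu₂'0
  have hmono : LL φ lam₂ ≤ LL φ lam₁ := LL_mono hφ hφpos hφconv htop hint ha₁ h12
  have hL1 : LL φ lam₁ ≤ Λ₁ := by
    by_contra hcon
    push_neg at hcon
    exact hmax₁ (LL φ lam₁) hcon (sol_exists hφ hφc hφpos hφconv htop hint ha₁)
  linarith
end

section
/- Let φ : (a,∞) → ℝ be C¹ strictly increasing with φ unbounded above, and suppose φ' is bounded above by M on (h,∞). Then the maximal solution of u''=φ'(u)(1+(u')²), u(0)=h, u'(0)=0 has infinite maximal interval, i.e. Λ_h = ∞. -/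
open Set Filter Real
open Topology MeasureTheory intervalIntegral

/-- Global existence: for `φ` C¹, strictly increasing, unbounded above, with
`φ' ≤ M` on `(h,∞)` and `e^{−φ}` not integrable on `(h,∞)`, the maximal
solution of `u'' = φ'(u)(1+(u')²)`, `u 0 = h`, `u' 0 = 0` is defined on all of
`ℝ`, i.e. `Λ_h = ∞`. -/
theorem stmt17 (a h M : ℝ) (ha : a < h)
    (φ φ' : ℝ → ℝ)
    (hφ : ∀ s ∈ Ioi a, HasDerivAt φ (φ' s) s)
    (hφc : ContinuousOn φ' (Ioi a))
    (hφpos : ∀ s ∈ Ioi a, 0 < φ' s)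
    (htop : Tendsto φ atTop atTop)
    (hM : ∀ s ∈ Ioi h, φ' s ≤ M)
    (hnint : ¬ MeasureTheory.IntegrableOn (fun t => Real.exp (-φ t)) (Ioi h)) :
    ∃ u u' : ℝ → ℝ,
      (∀ x, HasDerivAt u (u' x) x) ∧
      (∀ x, HasDerivAt u' (φ' (u x) * (1 + u' x ^ 2)) x) ∧
      (∀ x, u x ∈ Ioi a) ∧ u 0 = h ∧ u' 0 = 0 := by
  clear htop hM
  have hmem : ∀ t, h ≤ t → t ∈ Ioi a := fun t ht => lt_of_lt_of_le ha ht
  have hφcont : ∀ s ∈ Ioi a, ContinuousAt φ s := fun s hs => (hφ s hs).continuousAt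
  have hφmono : StrictMonoOn φ (Ioi a) := by
    apply strictMonoOn_of_deriv_pos (convex_Ioi a)
      (fun s hs => (hφcont s hs).continuousWithinAt)
    intro s hs
    rw [interior_Ioi] at hs
    rw [(hφ s hs).deriv]
    exact hφpos s hs
  set g : ℝ → ℝ := fun t => (Real.sqrt (Real.exp (2 * (φ t - φ h)) - 1))⁻¹ with hg_def
  have hE0 : ∀ t, h < t → 0 < Real.exp (2 * (φ t - φ h)) - 1 := by
    intro t ht
    have h1 : φ h < φ t := hφmono (hmem h le_rfl) (hmem t ht.le) ht
    have := Real.add_one_le_exp (2 * (φ t - φ h))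
    nlinarith
  have hg_pos : ∀ t, h < t → 0 < g t := fun t ht =>
    inv_pos.2 (Real.sqrt_pos.2 (hE0 t ht))
  have hg_nonneg : ∀ t, 0 ≤ g t := fun t => inv_nonneg.2 (Real.sqrt_nonneg _)
  have hgat : ∀ t, h < t → ContinuousAt g t := by
    intro t ht
    have h1 : ContinuousAt (fun t => Real.exp (2 * (φ t - φ h)) - 1) t :=
      ((Real.continuous_exp.continuousAt.comp
        (((hφ t (hmem t ht.le)).continuousAt.sub continuousAt_const).const_mul 2))).sub
        continuousAt_const
    exact (Real.continuous_sqrt.continuousAt.comp h1).inv₀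
      (ne_of_gt (Real.sqrt_pos.2 (hE0 t ht)))
  -- integrability of g near h
  have hInt : ∀ b, h < b → IntegrableOn g (Ioc h b) := by
    intro b hb
    obtain ⟨t₀, ht₀, hmin⟩ := isCompact_Icc.exists_isMinOn (f := φ')
      ⟨h, le_rfl, hb.le⟩ (hφc.mono (fun t ht => hmem t ht.1))
    set m := φ' t₀ with hm_def
    have hm : 0 < m := hφpos t₀ (hmem t₀ ht₀.1)
    have hMVT : ∀ t ∈ Ioc h b, m * (t - h) ≤ φ t - φ h := by
      intro t ht
      obtain ⟨c, hc, hceq⟩ := exists_hasDerivAt_eq_slope φ φ' ht.1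
        (fun x hx => (hφcont x (hmem x hx.1)).continuousWithinAt)
        (fun x hx => hφ x (hmem x hx.1.le))
      have h2 : m ≤ φ' c := hmin ⟨hc.1.le, le_trans hc.2.le ht.2⟩
      rw [hceq] at h2
      have h3 : 0 < t - h := by linarith [ht.1]
      calc m * (t - h) ≤ (φ t - φ h) / (t - h) * (t - h) := by
            exact mul_le_mul_of_nonneg_right h2 h3.le
        _ = φ t - φ h := by field_simp
    have hbound : ∀ t ∈ Ioc h b, g t ≤ (Real.sqrt (2 * m))⁻¹ * (t - h) ^ (-(1/2) : ℝ) := by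
      intro t ht
      have h3 : 0 < t - h := by linarith [ht.1]
      have h1 : 2 * m * (t - h) ≤ Real.exp (2 * (φ t - φ h)) - 1 := by
        have := Real.add_one_le_exp (2 * (φ t - φ h))
        nlinarith [hMVT t ht]
      have h2 : Real.sqrt (2 * m * (t - h)) ≤ Real.sqrt (Real.exp (2 * (φ t - φ h)) - 1) :=
        Real.sqrt_le_sqrt h1
      have h4 : 0 < Real.sqrt (2 * m * (t - h)) := Real.sqrt_pos.2 (by positivity)
      have h5 : g t ≤ (Real.sqrt (2 * m * (t - h)))⁻¹ := by
        exact inv_anti₀ h4 h2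
      refine h5.trans (le_of_eq ?_)
      rw [Real.sqrt_mul (by positivity) (t - h), mul_inv,
        Real.sqrt_eq_rpow (t - h), ← Real.rpow_neg h3.le]
    have hdom : IntegrableOn (fun t => (Real.sqrt (2 * m))⁻¹ * (t - h) ^ (-(1/2) : ℝ)) (Ioc h b) := by
      have h1 : IntervalIntegrable (fun x : ℝ => x ^ (-(1/2) : ℝ)) volume 0 (b - h) :=
        intervalIntegral.intervalIntegrable_rpow' (by norm_num)
      have h2 := (h1.comp_sub_right h).const_mul (Real.sqrt (2 * m))⁻¹
      rw [zero_add] at h2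
      have h3 : b - h + h = b := by ring
      rw [h3] at h2
      rw [intervalIntegrable_iff_integrableOn_Ioc_of_le hb.le] at h2
      exact h2
    have hgc : ContinuousOn g (Ioc h b) := fun t ht => (hgat t ht.1).continuousWithinAt
    apply hdom.mono' (hgc.aestronglyMeasurable measurableSet_Ioc)
    rw [MeasureTheory.ae_restrict_iff' measurableSet_Ioc]
    exact Eventually.of_forall fun t ht => by
      rw [Real.norm_eq_abs, abs_of_nonneg (hg_nonneg t)]; exact hbound t ht
  have hII : ∀ b c, h ≤ b → h ≤ c → IntervalIntegrable g volume b c := by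
    have key : ∀ b c, h ≤ b → h ≤ c → b ≤ c → IntervalIntegrable g volume b c := by
      intro b c hb hc hbc
      rcases eq_or_lt_of_le hc with hc' | hc'
      · have hbc' : b = c := le_antisymm hbc (by linarith)
        subst hbc'
        rw [intervalIntegrable_iff_integrableOn_Ioc_of_le le_rfl, Set.Ioc_self]
        exact integrableOn_empty
      · rw [intervalIntegrable_iff_integrableOn_Ioc_of_le hbc]
        exact (hInt c hc').mono_set (Ioc_subset_Ioc_left hb)
    intro b c hb hc
    rcases le_total b c with hbc | hbc
    · exact key b c hb hc hbc
    · exact (key c b hc hb hbc).symm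
  set F : ℝ → ℝ := fun x => ∫ t in h..x, g t with hF_def
  have hF0 : F h = 0 := intervalIntegral.integral_same
  have hFnonneg : ∀ x, h ≤ x → 0 ≤ F x := fun x hx =>
    intervalIntegral.integral_nonneg hx (fun t _ => hg_nonneg t)
  have hFd : ∀ x, h < x → HasDerivAt F (g x) x := by
    intro x hx
    exact intervalIntegral.integral_hasDerivAt_right (hII h x le_rfl hx.le)
      ((ContinuousOn.stronglyMeasurableAtFilter isOpen_Ioi
        (fun t ht => (hgat t ht).continuousWithinAt) (μ := volume)) x hx)
      (hgat x hx)
  have hFadd : ∀ b c, h ≤ b → h ≤ c → F c = F b + ∫ t in b..c, g t := by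
    intro b c hb hc
    rw [hF_def]
    exact (intervalIntegral.integral_add_adjacent_intervals (hII h b le_rfl hb)
      (hII b c hb hc)).symm
  have hFmono : StrictMonoOn F (Ici h) := by
    intro x hx y hy hxy
    have hmid : h < (x + y) / 2 := by
      simp only [mem_Ici] at hx; linarith
    have hxmid : x ≤ (x + y) / 2 := by linarith
    have hmidy : (x + y) / 2 < y := by linarith
    have h1 : F y = F x + ((∫ t in x..((x+y)/2), g t) + ∫ t in ((x+y)/2)..y, g t) := by
      rw [hFadd x y hx hy,
        intervalIntegral.integral_add_adjacent_intervals (hII x ((x+y)/2) hx hmid.le)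
          (hII ((x+y)/2) y hmid.le hy)]
    have h2 : 0 ≤ ∫ t in x..((x+y)/2), g t :=
      intervalIntegral.integral_nonneg hxmid (fun t _ => hg_nonneg t)
    have h3 : 0 < ∫ t in ((x+y)/2)..y, g t := by
      apply intervalIntegral.intervalIntegral_pos_of_pos_on (hII ((x+y)/2) y hmid.le hy)
        _ hmidy
      intro t ht
      exact hg_pos t (lt_trans hmid ht.1)
    rw [h1]; linarith
  -- F is unbounded above
  have hg_lower : ∀ t, h < t → Real.exp (-φ t) ≤ Real.exp (-φ h) * g t := by
    intro t ht
    have hE := hE0 t ht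
    have h1 : Real.sqrt (Real.exp (2 * (φ t - φ h)) - 1) ≤ Real.exp (φ t - φ h) := by
      have h2 : Real.exp (2 * (φ t - φ h)) - 1 ≤ Real.exp (2 * (φ t - φ h)) := by linarith
      have h3 : Real.sqrt (Real.exp (2 * (φ t - φ h))) = Real.exp (φ t - φ h) := by
        rw [show (2 : ℝ) * (φ t - φ h) = (φ t - φ h) + (φ t - φ h) by ring, Real.exp_add,
          ← sq]
        exact Real.sqrt_sq (Real.exp_nonneg _)
      calc Real.sqrt (Real.exp (2 * (φ t - φ h)) - 1)
          ≤ Real.sqrt (Real.exp (2 * (φ t - φ h))) := Real.sqrt_le_sqrt h2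
        _ = Real.exp (φ t - φ h) := h3
    have h4 : (Real.exp (φ t - φ h))⁻¹ ≤ g t :=
      inv_anti₀ (Real.sqrt_pos.2 hE) h1
    rw [← Real.exp_neg] at h4
    refine le_trans (le_of_eq ?_) (mul_le_mul_of_nonneg_left h4 (Real.exp_nonneg (-φ h)))
    rw [← Real.exp_add]
    congr 1
    ring
  have hFub : ∀ C : ℝ, ∃ x, h < x ∧ C < F x := by
    intro C
    by_contra hcon
    push_neg at hcon
    apply hnint
    have hexpcont : ∀ i, IntegrableOn (fun t => Real.exp (-φ t)) (Ioc h i) := by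
      intro i
      rcases le_or_gt i h with hi | hi
      · rw [Ioc_eq_empty (by exact not_lt.2 hi)]
        exact integrableOn_empty
      · apply ((ContinuousOn.integrableOn_Icc ?_).mono_set Ioc_subset_Icc_self)
        intro t ht
        exact (Real.continuous_exp.continuousAt.comp
          (hφcont t (hmem t ht.1)).neg).continuousWithinAt
    apply MeasureTheory.integrableOn_Ioi_of_intervalIntegral_norm_bounded
      (l := atTop) (b := fun i : ℝ => i)
      (Real.exp (-φ h) * max C 0) h hexpcont tendsto_id
    filter_upwards [eventually_ge_atTop h] with i hi
    rcases eq_or_lt_of_le hi with hi' | hi'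
    · rw [← hi', intervalIntegral.integral_same]
      positivity
    have h1 : (∫ x in h..i, ‖Real.exp (-φ x)‖) = ∫ x in Ioc h i, Real.exp (-φ x) := by
      rw [intervalIntegral.integral_of_le hi]
      congr 1
      ext x
      rw [Real.norm_eq_abs, abs_of_pos (Real.exp_pos _)]
    rw [h1]
    have h2 : (∫ x in Ioc h i, Real.exp (-φ x)) ≤ ∫ x in Ioc h i, Real.exp (-φ h) * g x := by
      apply MeasureTheory.setIntegral_mono_on (hexpcont i)
        ((hInt i hi').const_mul _) measurableSet_Ioc
      intro x hx
      exact hg_lower x hx.1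
    refine h2.trans ?_
    rw [MeasureTheory.integral_const_mul, ← intervalIntegral.integral_of_le hi]
    have h3 : F i ≤ max C 0 := le_trans (hcon i hi') (le_max_left _ _)
    have := mul_le_mul_of_nonneg_left h3 (Real.exp_nonneg (-φ h))
    exact this
  -- surjectivity onto [0, ∞)
  have hcF : ∀ b, h < b → ContinuousOn F (Icc h b) := by
    intro b hb
    have h1 : IntegrableOn g (Icc h b) := by
      rw [integrableOn_Icc_iff_integrableOn_Ioc]
      exact hInt b hb
    have h2 := intervalIntegral.continuousOn_primitive (a := h) (b := b) h1
    apply h2.congr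
    intro x hx
    rw [hF_def]
    exact intervalIntegral.integral_of_le hx.1
  have hsurj : ∀ x, 0 ≤ x → ∃ l, h ≤ l ∧ F l = x := by
    intro x hx
    obtain ⟨b, hb, hFb⟩ := hFub x
    have h1 : x ∈ Icc (F h) (F b) := ⟨hF0 ▸ hx, hFb.le⟩
    obtain ⟨l, hl, hFl⟩ := intermediate_value_Icc hb.le (hcF b hb) h1
    exact ⟨l, hl.1, hFl⟩
  choose Psi hΨ1 hΨ2 using hsurj
  set ψ : ℝ → ℝ := fun x => if hx : 0 ≤ x then Psi x hx else h with hψ_def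
  have hψge : ∀ x, 0 ≤ x → h ≤ ψ x := by
    intro x hx; rw [hψ_def]; simp only [dif_pos hx]; exact hΨ1 x hx
  have hFψ : ∀ x, 0 ≤ x → F (ψ x) = x := by
    intro x hx; rw [hψ_def]; simp only [dif_pos hx]; exact hΨ2 x hx
  have hψ0 : ψ 0 = h := by
    refine hFmono.injOn (mem_Ici.2 (hψge 0 le_rfl)) (mem_Ici.2 le_rfl) ?_
    rw [hFψ 0 le_rfl, hF0]
  have hψgt : ∀ x, 0 < x → h < ψ x := by
    intro x hx
    rcases eq_or_lt_of_le (hψge x hx.le) with he | hl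
    · exfalso
      have h1 : F (ψ x) = x := hFψ x hx.le
      rw [← he, hF0] at h1
      linarith
    · exact hl
  have hψlt_iff : ∀ x μ, 0 ≤ x → h ≤ μ → (ψ x < μ ↔ x < F μ) := by
    intro x μ hx hμ
    constructor
    · intro hlt
      have h1 := hFmono (mem_Ici.2 (hψge x hx)) (mem_Ici.2 hμ) hlt
      rwa [hFψ x hx] at h1
    · intro hlt
      by_contra hcon
      push_neg at hcon
      have h1 := hFmono.monotoneOn (mem_Ici.2 hμ) (mem_Ici.2 (hψge x hx)) hcon
      rw [hFψ x hx] at h1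
      linarith
  have hψcont : ∀ x, 0 < x → ContinuousAt ψ x := by
    intro x hx
    rw [Metric.continuousAt_iff]
    intro ε hε
    have hlam : h < ψ x := hψgt x hx
    set ε' : ℝ := min ε ((ψ x - h) / 2) with hε'_def
    have hε'pos : 0 < ε' := lt_min hε (by linarith)
    have hε'le : ε' ≤ ε := min_le_left _ _
    have h1 : h ≤ ψ x - ε' := by
      have := min_le_right ε ((ψ x - h) / 2)
      rw [← hε'_def] at this
      linarith
    have h2 : F (ψ x - ε') < x := by
      have h2' := hFmono (mem_Ici.2 h1) (mem_Ici.2 hlam.le) (by linarith)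
      rwa [hFψ x hx.le] at h2'
    have h3 : x < F (ψ x + ε') := by
      have h3' := hFmono (mem_Ici.2 hlam.le) (mem_Ici.2 (by linarith : h ≤ ψ x + ε'))
        (by linarith)
      rwa [hFψ x hx.le] at h3'
    refine ⟨min (x - F (ψ x - ε')) (F (ψ x + ε') - x), lt_min (by linarith) (by linarith), ?_⟩
    intro y hy
    rw [Real.dist_eq] at hy
    have hy' := abs_lt.1 hy
    have hd1 : min (x - F (ψ x - ε')) (F (ψ x + ε') - x) ≤ x - F (ψ x - ε') := min_le_left _ _
    have hd2 : min (x - F (ψ x - ε')) (F (ψ x + ε') - x) ≤ F (ψ x + ε') - x := min_le_right _ _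
    have hy1 : F (ψ x - ε') < y := by linarith [hy'.1]
    have hy2 : y < F (ψ x + ε') := by linarith [hy'.2]
    have hy0 : 0 ≤ y := le_trans (hFnonneg _ h1) hy1.le
    have hub : ψ y < ψ x + ε' := (hψlt_iff y _ hy0 (by linarith)).2 hy2
    have hlb : ψ x - ε' < ψ y := by
      by_contra hcon
      push_neg at hcon
      have h4 := hFmono.monotoneOn (mem_Ici.2 (hψge y hy0)) (mem_Ici.2 h1) hcon
      rw [hFψ y hy0] at h4
      linarith
    rw [Real.dist_eq, abs_lt]
    constructor <;> [linarith; linarith]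
  set u : ℝ → ℝ := fun x => ψ |x| with hu_def
  have hu0 : u 0 = h := by rw [hu_def]; simp only [abs_zero]; exact hψ0
  have huge : ∀ x, h ≤ u x := fun x => hψge _ (abs_nonneg x)
  have hugt : ∀ x, x ≠ 0 → h < u x := fun x hx => hψgt _ (abs_pos.2 hx)
  have huIoi : ∀ x, u x ∈ Ioi a := fun x => hmem _ (huge x)
  have hucont0 : ContinuousAt u 0 := by
    rw [Metric.continuousAt_iff]
    intro ε hε
    set ε' : ℝ := min ε 1 with hε'_def
    have hε'pos : 0 < ε' := lt_min hε one_pos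
    have hδ : 0 < F (h + ε') := by
      have h1 := hFmono (mem_Ici.2 le_rfl) (mem_Ici.2 (by linarith : h ≤ h + ε'))
        (by linarith)
      rwa [hF0] at h1
    refine ⟨F (h + ε'), hδ, ?_⟩
    intro y hy
    rw [Real.dist_eq, sub_zero] at hy
    have h1 : ψ |y| < h + ε' := (hψlt_iff _ _ (abs_nonneg y) (by linarith)).2 hy
    have h2 : h ≤ ψ |y| := hψge _ (abs_nonneg y)
    rw [Real.dist_eq, hu0, abs_lt]
    have : u y = ψ |y| := rfl
    rw [this]
    constructor
    · linarith
    · have := min_le_left ε 1; rw [← hε'_def] at this; linarith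
  set sfun : ℝ → ℝ := fun x => Real.sqrt (Real.exp (2 * (φ (u x) - φ h)) - 1) with hsfun_def
  set v : ℝ → ℝ := fun x => if x < 0 then -sfun x else sfun x with hv_def
  have hv0 : v 0 = 0 := by
    rw [hv_def]
    simp only [lt_irrefl, if_false, hsfun_def]
    rw [hu0]
    simp
  have hvcont0 : ContinuousAt v 0 := by
    have hsc : Tendsto sfun (𝓝 0) (𝓝 0) := by
      have hφu : ContinuousAt (fun x => φ (u x)) 0 :=
        (hφcont (u 0) (huIoi 0)).comp hucont0
      have hc : ContinuousAt sfun 0 :=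
        Real.continuous_sqrt.continuousAt.comp
          ((Real.continuous_exp.continuousAt.comp
            ((hφu.sub continuousAt_const).const_mul 2)).sub continuousAt_const)
      have hs0 : sfun 0 = 0 := by rw [hsfun_def]; simp only; rw [hu0]; simp
      rw [ContinuousAt, hs0] at hc
      exact hc
    have htv : Tendsto v (𝓝 0) (𝓝 0) := by
      apply squeeze_zero_norm _ hsc
      intro y
      rw [hv_def]
      by_cases hy : y < 0
      · simp only [if_pos hy, norm_neg, Real.norm_eq_abs,
          abs_of_nonneg (Real.sqrt_nonneg _)]
        exact le_of_eq (abs_of_nonneg (Real.sqrt_nonneg _))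
      · simp only [if_neg hy, Real.norm_eq_abs, abs_of_nonneg (Real.sqrt_nonneg _)]
        exact le_of_eq (abs_of_nonneg (Real.sqrt_nonneg _))
    rw [ContinuousAt, hv0]
    exact htv
  have hψd : ∀ x, 0 < x → HasDerivAt ψ (Real.sqrt (Real.exp (2 * (φ (ψ x) - φ h)) - 1)) x := by
    intro x hx
    have h1 : HasDerivAt F (g (ψ x)) (ψ x) := hFd (ψ x) (hψgt x hx)
    have h2 := HasDerivAt.of_local_left_inverse (hψcont x hx) h1
      (ne_of_gt (hg_pos _ (hψgt x hx)))
      (Filter.eventually_of_mem (Ioi_mem_nhds hx) fun y hy => hFψ y (le_of_lt hy))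
    simp only [hg_def, inv_inv] at h2
    exact h2
  have hud : ∀ x, x ≠ 0 → HasDerivAt u (v x) x := by
    intro x hx
    rcases lt_or_gt_of_ne hx with hneg | hpos
    · have h1 : HasDerivAt (fun y => ψ (-y))
          (Real.sqrt (Real.exp (2 * (φ (ψ (-x)) - φ h)) - 1) * (-1)) x :=
        (hψd (-x) (by linarith)).comp x (hasDerivAt_neg x)
      have h2 : u =ᶠ[𝓝 x] fun y => ψ (-y) :=
        Filter.eventually_of_mem (Iio_mem_nhds hneg) fun y hy => by
          rw [hu_def]; simp only; rw [abs_of_neg hy]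
      have h3 := h1.congr_of_eventuallyEq h2
      convert h3 using 1
      case e'_4 => rfl
      case e'_5 => rfl
      rw [hv_def]
      simp only [if_pos hneg, hsfun_def]
      rw [hu_def]
      simp only
      rw [abs_of_neg hneg]
      ring
    · have h1 : HasDerivAt ψ (Real.sqrt (Real.exp (2 * (φ (ψ x) - φ h)) - 1)) x :=
        hψd x hpos
      have h2 : u =ᶠ[𝓝 x] ψ :=
        Filter.eventually_of_mem (Ioi_mem_nhds hpos) fun y hy => by
          rw [hu_def]; simp only; rw [abs_of_pos hy]
      have h3 := h1.congr_of_eventuallyEq h2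
      convert h3 using 1
      case e'_4 => rfl
      case e'_5 => rfl
      rw [hv_def]
      simp only [if_neg (not_lt.2 hpos.le), hsfun_def]
      rw [hu_def]
      simp only
      rw [abs_of_pos hpos]
  have hud0 : HasDerivAt u (v 0) 0 :=
    hasDerivAt_of_hasDerivAt_of_ne (fun y hy => hud y hy) hucont0 hvcont0
  have hvd : ∀ x, x ≠ 0 → HasDerivAt v (φ' (u x) * (1 + v x ^ 2)) x := by
    intro x hx
    have hux : h < u x := hugt x hx
    have hE : 0 < Real.exp (2 * (φ (u x) - φ h)) - 1 := hE0 _ hux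
    have hd_u : HasDerivAt u (v x) x := hud x hx
    have hd_phi : HasDerivAt (fun y => φ (u y)) (φ' (u x) * v x) x :=
      (hφ (u x) (huIoi x)).comp x hd_u
    have hd_E : HasDerivAt (fun y => Real.exp (2 * (φ (u y) - φ h)) - 1)
        (Real.exp (2 * (φ (u x) - φ h)) * (2 * (φ' (u x) * v x))) x :=
      (((hd_phi.sub_const (φ h)).const_mul 2).exp).sub_const 1
    have hd_s : HasDerivAt sfun
        (1 / (2 * Real.sqrt (Real.exp (2 * (φ (u x) - φ h)) - 1)) *
          (Real.exp (2 * (φ (u x) - φ h)) * (2 * (φ' (u x) * v x)))) x :=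
      (Real.hasDerivAt_sqrt (ne_of_gt hE)).comp x hd_E
    have hsq : Real.sqrt (Real.exp (2 * (φ (u x) - φ h)) - 1) ^ 2
        = Real.exp (2 * (φ (u x) - φ h)) - 1 := Real.sq_sqrt hE.le
    have hsqrt_pos : 0 < Real.sqrt (Real.exp (2 * (φ (u x) - φ h)) - 1) :=
      Real.sqrt_pos.2 hE
    rcases lt_or_gt_of_ne hx with hneg | hpos
    · have h2 : v =ᶠ[𝓝 x] (fun y => -(sfun y)) :=
        Filter.eventually_of_mem (Iio_mem_nhds hneg) fun y hy => by rw [hv_def]; simp only [if_pos (show y < (0:ℝ) from hy)]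
      have h3 := hd_s.neg.congr_of_eventuallyEq h2
      convert h3 using 1
      case e'_4 => rfl
      case e'_5 => rfl
      have hvx : v x = -Real.sqrt (Real.exp (2 * (φ (u x) - φ h)) - 1) := by
        rw [hv_def]; simp only [if_pos hneg, hsfun_def]
      rw [hvx, neg_sq, hsq]
      field_simp
      ring
    · have h2 : v =ᶠ[𝓝 x] sfun :=
        Filter.eventually_of_mem (Ioi_mem_nhds hpos) fun y hy => by
          rw [hv_def]; simp only [if_neg (not_lt.2 (le_of_lt (show (0:ℝ) < y from hy)))]
      have h3 := hd_s.congr_of_eventuallyEq h2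
      convert h3 using 1
      case e'_4 => rfl
      case e'_5 => rfl
      have hvx : v x = Real.sqrt (Real.exp (2 * (φ (u x) - φ h)) - 1) := by
        rw [hv_def]; simp only [if_neg (not_lt.2 hpos.le), hsfun_def]
      rw [hvx, hsq]
      field_simp
      ring
  have hwcont0 : ContinuousAt (fun x => φ' (u x) * (1 + v x ^ 2)) 0 :=
    ((hφc.continuousAt (isOpen_Ioi.mem_nhds (huIoi 0))).comp hucont0).mul
      (continuousAt_const.add (hvcont0.pow 2))
  have hvd0 : HasDerivAt v (φ' (u 0) * (1 + v 0 ^ 2)) 0 :=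
    hasDerivAt_of_hasDerivAt_of_ne (fun y hy => hvd y hy) hvcont0 hwcont0
  refine ⟨u, v, ?_, ?_, huIoi, hu0, hv0⟩
  · intro x
    rcases eq_or_ne x 0 with rfl | hx
    · exact hud0
    · exact hud x hx
  · intro x
    rcases eq_or_ne x 0 with rfl | hx
    · exact hvd0
    · exact hvd x hx
end
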